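/- arXiv:2303.04733 — 3 statements merged into one kernel-verified Lean document; each statement's English description precedes it below -/
import Mathlib

section
/- Let f(x) = Σ_α c_α x^α be a homogeneous polynomial in n variables with real coefficients such that its normalization N(f) (obtained by replacing each monomial x^α by x^α/α!) is Lorentzian. Then for every exponent vector α ∈ ℕ^n and every pair of indices i, j ∈ [n], the inequality c_α² ≥ c_{α+e_i−e_j} · c_{α−e_i+e_j} holds. -/
open MvPolynomial

/-- M-convexity of a set of exponent vectors. -/
def MConvex {σ : Type*} (J : Set (σ →₀ ℕ)) : Prop :=
  ∀ α ∈ J, ∀ β ∈ J, ∀ i : σ, β i < α i →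
    ∃ j : σ, α j < β j ∧ (α - Finsupp.single i 1 + Finsupp.single j 1) ∈ J ∧
      (β - Finsupp.single j 1 + Finsupp.single i 1) ∈ J

/-- Hessian matrix of a polynomial (entries are constant terms of second derivatives). -/
noncomputable def hessMv {n : ℕ} (f : MvPolynomial (Fin n) ℝ) : Matrix (Fin n) (Fin n) ℝ :=
  fun i j => (MvPolynomial.pderiv i (MvPolynomial.pderiv j f)).coeff 0

/-- A real symmetric matrix has at most one positive eigenvalue. -/
def AtMostOnePosEig {n : ℕ} (H : Matrix (Fin n) (Fin n) ℝ) : Prop :=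
  ∃ hH : H.IsHermitian, (Finset.univ.filter fun i => 0 < hH.eigenvalues i).card ≤ 1

/-- Lorentzian polynomials of degree `d` in `n` variables (Brändén–Huh). -/
def Lorentzian {n : ℕ} : ℕ → MvPolynomial (Fin n) ℝ → Prop
  | 0, f => f.IsHomogeneous 0 ∧ ∀ m, 0 ≤ f.coeff m
  | 1, f => f.IsHomogeneous 1 ∧ ∀ m, 0 ≤ f.coeff m
  | 2, f => f.IsHomogeneous 2 ∧ (∀ m, 0 ≤ f.coeff m) ∧ MConvex ((f.support : Finset (Fin n →₀ ℕ)) : Set (Fin n →₀ ℕ)) ∧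
      AtMostOnePosEig (hessMv f)
  | (d+3), f => f.IsHomogeneous (d+3) ∧ (∀ m, 0 ≤ f.coeff m) ∧ MConvex ((f.support : Finset (Fin n →₀ ℕ)) : Set (Fin n →₀ ℕ)) ∧
      ∀ i, Lorentzian (d+2) (MvPolynomial.pderiv i f)

/-- The normalization operator `N(x^α) = x^α/α!`. -/
noncomputable def normalizeMv {n : ℕ} (f : MvPolynomial (Fin n) ℝ) : MvPolynomial (Fin n) ℝ :=
  ∑ α ∈ f.support, MvPolynomial.monomial α (f.coeff α / (α.prod fun _ m => (Nat.factorial m : ℝ)))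

lemma coeff_pderiv' {n : ℕ} (i : Fin n) (p : MvPolynomial (Fin n) ℝ) (m : Fin n →₀ ℕ) :
    (pderiv i p).coeff m = ((m i : ℝ) + 1) * p.coeff (m + Finsupp.single i 1) := by
  induction p using MvPolynomial.induction_on' with
  | add p q hp hq => simp [hp, hq, mul_add]
  | monomial s a =>
    rw [pderiv_monomial]
    simp only [coeff_monomial]
    by_cases h : s = m + Finsupp.single i 1
    · subst h
      have h1 : m + Finsupp.single i 1 - Finsupp.single i 1 = m := by
        ext k; simp [Finsupp.single_apply]
      have h2 := Finsupp.add_apply m (Finsupp.single i 1) i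
      rw [if_pos h1, if_pos rfl, h2]
      simp only [Finsupp.single_apply, if_pos rfl]
      push_cast; ring
    · rw [if_neg h, mul_zero]
      by_cases h2 : s - Finsupp.single i 1 = m
      · rw [if_pos h2]
        have hsi : s i = 0 := by
          by_contra hsi
          apply h
          ext k
          have hthis := DFunLike.congr_fun h2 k
          rw [Finsupp.tsub_apply] at hthis
          rw [Finsupp.add_apply]
          by_cases hk : k = i
          · subst hk
            simp only [Finsupp.single_eq_same] at hthis ⊢
            omega
          · simp only [Finsupp.single_eq_of_ne hk] at hthis ⊢
            omega
        simp [hsi]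
      · rw [if_neg h2]

lemma fact_prod_pos {n : ℕ} (μ : Fin n →₀ ℕ) :
    (0:ℝ) < μ.prod fun _ m => (m.factorial : ℝ) := by
  apply Finset.prod_pos
  intro k _
  show (0:ℝ) < ((μ k).factorial : ℝ)
  exact_mod_cast Nat.factorial_pos _

lemma fact_prod_add_single {n : ℕ} (μ : Fin n →₀ ℕ) (k : Fin n) :
    ((μ + Finsupp.single k 1).prod fun _ m => (m.factorial : ℝ))
      = ((μ k : ℝ) + 1) * μ.prod fun _ m => (m.factorial : ℝ) := by
  classical
  set ν : Fin n →₀ ℕ := μ + Finsupp.single k 1 with hν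
  set s : Finset (Fin n) := insert k (μ.support ∪ ν.support) with hs
  have h1 : (ν.prod fun _ m => (m.factorial : ℝ)) = ∏ l ∈ s, ((ν l).factorial : ℝ) := by
    apply Finsupp.prod_of_support_subset
    · intro x hx; simp [hs, Finset.mem_insert, hx]
    · intro l _; simp
  have h2 : (μ.prod fun _ m => (m.factorial : ℝ)) = ∏ l ∈ s, ((μ l).factorial : ℝ) := by
    apply Finsupp.prod_of_support_subset
    · intro x hx; simp [hs, Finset.mem_insert, hx]
    · intro l _; simp
  have hk : k ∈ s := Finset.mem_insert_self _ _
  rw [h1, h2, ← Finset.mul_prod_erase s _ hk, ← Finset.mul_prod_erase s _ hk]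
  have h3 : ∏ l ∈ s.erase k, ((ν l).factorial : ℝ) = ∏ l ∈ s.erase k, ((μ l).factorial : ℝ) := by
    apply Finset.prod_congr rfl
    intro l hl
    have hlk : l ≠ k := Finset.ne_of_mem_erase hl
    have : ν l = μ l := by
      rw [hν, Finsupp.add_apply, Finsupp.single_apply, if_neg (fun hh => hlk hh.symm), add_zero]
    rw [this]
  rw [h3]
  have h4 : ν k = μ k + 1 := by
    rw [hν, Finsupp.add_apply, Finsupp.single_apply, if_pos rfl]
  rw [h4, Nat.factorial_succ]
  push_cast; ring

lemma degree_add' {n : ℕ} (a b : Fin n →₀ ℕ) : (a + b).degree = a.degree + b.degree := by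
  simp [Finsupp.degree_eq_weight_one, map_add]

lemma degree_single' {n : ℕ} (k : Fin n) (m : ℕ) : (Finsupp.single k m).degree = m := by
  by_cases h : m = 0
  · simp [h, Finsupp.degree]
  · exact Finsupp.degree_single k m

lemma sum_le_degree {n : ℕ} (γ : Fin n →₀ ℕ) (s : Finset (Fin n)) :
    ∑ l ∈ s, γ l ≤ γ.degree := by
  rw [Finsupp.degree]
  calc ∑ l ∈ s, γ l ≤ ∑ l ∈ s ∪ γ.support, γ l :=
        Finset.sum_le_sum_of_subset Finset.subset_union_left
    _ = ∑ l ∈ γ.support, γ l := by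
        refine (Finset.sum_subset Finset.subset_union_right ?_).symm
        intro x _ hx
        exact Finsupp.notMem_support_iff.mp hx

lemma quad {n : ℕ} {H : Matrix (Fin n) (Fin n) ℝ} (h1 : AtMostOnePosEig H)
    (i j : Fin n) (hii : 0 ≤ H i i) (hjj : 0 ≤ H j j) :
    H i i * H j j ≤ H i j ^ 2 := by
  by_contra hlt
  push_neg at hlt
  obtain ⟨hH, hcard⟩ := h1
  set U : Matrix (Fin n) (Fin n) ℝ := (hH.eigenvectorUnitary : Matrix (Fin n) (Fin n) ℝ) with hU
  have hsym : H j i = H i j := by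
    have h := hH.apply j i
    simpa using h.symm
  have hform : ∀ x : Fin n → ℝ,
      dotProduct x (H.mulVec x) = ∑ k, hH.eigenvalues k * ((star U).mulVec x k)^2 := by
    intro x
    conv_lhs => rw [hH.spectral_theorem, Unitary.conjStarAlgAut_apply]
    rw [← Matrix.mulVec_mulVec, ← Matrix.mulVec_mulVec, Matrix.dotProduct_mulVec]
    have hvm : Matrix.vecMul x U = (star U).mulVec x := by
      rw [← Matrix.mulVec_transpose]
      rw [Matrix.star_eq_conjTranspose, Matrix.conjTranspose_eq_transpose_of_trivial]
    rw [hvm]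
    simp [dotProduct, Matrix.mulVec_diagonal]
    exact Finset.sum_congr rfl fun k _ => by rw [hU]; ring
  have hHii : 0 < H i i := by nlinarith [sq_nonneg (H i j)]
  obtain ⟨a, b, hab, horth⟩ : ∃ a b : ℝ, ¬(a = 0 ∧ b = 0) ∧
      ∀ k, 0 < hH.eigenvalues k →
        a * ((star U).mulVec (Pi.single i 1) k) + b * ((star U).mulVec (Pi.single j 1) k) = 0 := by
    by_cases hpos : ∃ k0, 0 < hH.eigenvalues k0
    · obtain ⟨k0, hk0⟩ := hpos
      have huniq : ∀ k, 0 < hH.eigenvalues k → k = k0 := by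
        intro k hk
        by_contra hne
        have hsub : ({k, k0} : Finset (Fin n)) ⊆ Finset.univ.filter fun l => 0 < hH.eigenvalues l := by
          intro l hl
          simp only [Finset.mem_insert, Finset.mem_singleton] at hl
          rcases hl with h|h <;> subst h <;> simp [hk, hk0]
        have hcc := Finset.card_le_card hsub
        rw [Finset.card_insert_of_notMem (by simpa using hne)] at hcc
        simp at hcc
        omega
      set p := (star U).mulVec (Pi.single i 1) k0 with hp
      set q := (star U).mulVec (Pi.single j 1) k0 with hq
      by_cases hpq : p = 0 ∧ q = 0
      · exact ⟨1, 0, by simp, fun k hk => by rw [huniq k hk, ← hp, ← hq, hpq.1, hpq.2]; ring⟩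
      · refine ⟨q, -p, ?_, fun k hk => by rw [huniq k hk, ← hp, ← hq]; ring⟩
        intro hqp
        exact hpq ⟨by have := hqp.2; linarith [neg_eq_zero.mp (by linarith : -p = 0)], hqp.1⟩
    · push_neg at hpos
      exact ⟨1, 0, by simp, fun k hk => absurd hk (not_lt.mpr (hpos k))⟩
  set x : Fin n → ℝ := a • (Pi.single i 1 : Fin n → ℝ) + b • (Pi.single j 1 : Fin n → ℝ) with hx
  have hle : dotProduct x (H.mulVec x) ≤ 0 := by
    rw [hform]
    apply Finset.sum_nonpos
    intro k _
    by_cases hk : 0 < hH.eigenvalues k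
    · have h0 : (star U).mulVec x k = 0 := by
        rw [hx]
        simp only [Matrix.mulVec_add, Matrix.mulVec_smul, Pi.add_apply, Pi.smul_apply,
          smul_eq_mul]
        exact horth k hk
      rw [h0]
      simp
    · push_neg at hk
      nlinarith [sq_nonneg ((star U).mulVec x k)]
  have hval : dotProduct x (H.mulVec x)
      = a^2 * H i i + 2*a*b*H i j + b^2 * H j j := by
    rw [hx]
    simp only [Matrix.mulVec_add, Matrix.mulVec_smul, dotProduct_add,
      dotProduct_smul, add_dotProduct, smul_dotProduct,
      Matrix.mulVec_single, single_dotProduct, smul_eq_mul, mul_one]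
    simp only [Matrix.col_apply, MulOpposite.op_one, one_smul, one_mul]
    rw [hsym]
    ring
  rw [hval] at hle
  by_cases hb : b = 0
  · have ha : a ≠ 0 := fun ha => hab ⟨ha, hb⟩
    have : 0 < a^2 := by positivity
    subst hb
    nlinarith
  · have hbb : 0 < b^2 := by positivity
    have hterm : 0 < b^2 * (H i i * H j j - H i j^2) := by nlinarith
    nlinarith [sq_nonneg (a * H i i + b * H i j), hterm,
      mul_nonpos_of_nonneg_of_nonpos (le_of_lt hHii) hle]

lemma key {n : ℕ} (d : ℕ) : ∀ g : MvPolynomial (Fin n) ℝ, Lorentzian d g →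
    ∀ γ : Fin n →₀ ℕ, γ.degree = d → ∀ i j : Fin n, i ≠ j → 0 < γ i → 0 < γ j →
    (((γ - Finsupp.single j 1 + Finsupp.single i 1).prod fun _ m => (m.factorial : ℝ)) *
        g.coeff (γ - Finsupp.single j 1 + Finsupp.single i 1)) *
    (((γ - Finsupp.single i 1 + Finsupp.single j 1).prod fun _ m => (m.factorial : ℝ)) *
        g.coeff (γ - Finsupp.single i 1 + Finsupp.single j 1))
      ≤ ((γ.prod fun _ m => (m.factorial : ℝ)) * g.coeff γ) ^ 2 := by
  induction d using Nat.strong_induction_on with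
  | _ d ih =>
  intro g hL γ hdeg i j hij hi hj
  have hij2 : γ i + γ j ≤ γ.degree := by
    have h := sum_le_degree γ {i, j}
    rwa [Finset.sum_insert (by simpa using hij), Finset.sum_singleton] at h
  match d, hL with
  | 0, hL => omega
  | 1, hL => omega
  | 2, hL =>
    obtain ⟨hhom, hnn, -, hpe⟩ := hL
    -- γ = eᵢ + eⱼ
    have hγi : γ i = 1 := by omega
    have hγj : γ j = 1 := by omega
    have hγ : γ = Finsupp.single i 1 + Finsupp.single j 1 := by
      ext k
      rw [Finsupp.add_apply, Finsupp.single_apply, Finsupp.single_apply]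
      by_cases hk : k = i
      · subst hk; rw [if_pos rfl, if_neg (fun h => hij h.symm)]; omega
      · rw [if_neg (fun h => hk h.symm)]
        by_cases hk2 : k = j
        · subst hk2; rw [if_pos rfl]; omega
        · rw [if_neg (fun h => hk2 h.symm)]
          by_contra hc
          have hik : i ≠ k := fun h => hk h.symm
          have hjk : j ≠ k := fun h => hk2 h.symm
          have h3 := sum_le_degree γ {i, j, k}
          rw [Finset.sum_insert (by simp [hij, hik]), Finset.sum_insert (by simp [hjk]),
            Finset.sum_singleton] at h3
          omega
    have hprod1 : ((Finsupp.single i 1 : Fin n →₀ ℕ).prod fun _ m => (m.factorial : ℝ)) = 1 := by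
      rw [Finsupp.prod_single_index] <;> simp
    have hprodγ : (γ.prod fun _ m => (m.factorial : ℝ)) = 1 := by
      rw [hγ, fact_prod_add_single, hprod1]
      simp [Finsupp.single_apply, hij]
    have hE1 : γ - Finsupp.single j 1 + Finsupp.single i 1
        = Finsupp.single i 1 + Finsupp.single i 1 := by
      rw [hγ, add_tsub_cancel_right]
    have hE2 : γ - Finsupp.single i 1 + Finsupp.single j 1
        = Finsupp.single j 1 + Finsupp.single j 1 := by
      rw [hγ, add_comm (Finsupp.single i 1), add_tsub_cancel_right]
    have hprod2 : ∀ k : Fin n,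
        (((Finsupp.single k 1 + Finsupp.single k 1) : Fin n →₀ ℕ).prod
          fun _ m => (m.factorial : ℝ)) = 2 := by
      intro k
      rw [fact_prod_add_single]
      have : ((Finsupp.single k 1 : Fin n →₀ ℕ) k : ℝ) = 1 := by simp
      rw [this, Finsupp.prod_single_index] <;> norm_num
    have hij' : hessMv g i j = g.coeff (Finsupp.single i 1 + Finsupp.single j 1) := by
      show (pderiv i (pderiv j g)).coeff 0 = _
      rw [coeff_pderiv', coeff_pderiv']
      simp [Finsupp.single_apply, hij]
    have hii' : hessMv g i i = 2 * g.coeff (Finsupp.single i 1 + Finsupp.single i 1) := by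
      show (pderiv i (pderiv i g)).coeff 0 = _
      rw [coeff_pderiv', coeff_pderiv']
      simp [Finsupp.single_apply]
      exact Or.inl (by norm_num)
    have hjj' : hessMv g j j = 2 * g.coeff (Finsupp.single j 1 + Finsupp.single j 1) := by
      show (pderiv j (pderiv j g)).coeff 0 = _
      rw [coeff_pderiv', coeff_pderiv']
      simp [Finsupp.single_apply]
      exact Or.inl (by norm_num)
    have hq := quad hpe i j
      (by rw [hii']; have := hnn (Finsupp.single i 1 + Finsupp.single i 1); linarith)
      (by rw [hjj']; have := hnn (Finsupp.single j 1 + Finsupp.single j 1); linarith)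
    rw [hij', hii', hjj'] at hq
    rw [hE1, hE2, hprodγ, hprod2, hprod2, hγ]
    nlinarith [hq]
  | (e+3), hL =>
    obtain ⟨hhom, hnn, -, hder⟩ := hL
    obtain ⟨k, hk1, hki, hkj⟩ : ∃ k, 0 < γ k ∧ 0 < ((γ - Finsupp.single k 1 : Fin n →₀ ℕ) i) ∧
        0 < ((γ - Finsupp.single k 1 : Fin n →₀ ℕ) j) := by
      by_cases h2i : 2 ≤ γ i
      · refine ⟨i, by omega, ?_, ?_⟩ <;> rw [Finsupp.tsub_apply, Finsupp.single_apply]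
        · rw [if_pos rfl]; omega
        · rw [if_neg hij]; omega
      · by_cases h2j : 2 ≤ γ j
        · refine ⟨j, by omega, ?_, ?_⟩ <;> rw [Finsupp.tsub_apply, Finsupp.single_apply]
          · rw [if_neg (fun h : j = i => hij h.symm)]; omega
          · rw [if_pos rfl]; omega
        · obtain ⟨k, hki', hkj', hk⟩ : ∃ k, k ≠ i ∧ k ≠ j ∧ 0 < γ k := by
            by_contra hc
            push_neg at hc
            have hsup : γ.support ⊆ {i, j} := by
              intro l hl
              rw [Finsupp.mem_support_iff] at hl
              simp only [Finset.mem_insert, Finset.mem_singleton]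
              by_contra hl2
              push_neg at hl2
              exact absurd (hc l hl2.1 hl2.2) (by omega)
            have hd1 : γ.degree ≤ ∑ l ∈ ({i, j} : Finset (Fin n)), γ l := by
              rw [Finsupp.degree]
              exact Finset.sum_le_sum_of_subset hsup
            rw [Finset.sum_insert (by simpa using hij), Finset.sum_singleton] at hd1
            omega
          refine ⟨k, hk, ?_, ?_⟩ <;> rw [Finsupp.tsub_apply, Finsupp.single_apply]
          · rw [if_neg hki']; omega
          · rw [if_neg hkj']; omega
    have hkleγ : Finsupp.single k 1 ≤ γ := Finsupp.single_le_iff.mpr hk1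
    have hE3 : γ - Finsupp.single k 1 + Finsupp.single k 1 = γ :=
      tsub_add_cancel_of_le hkleγ
    have hdeg' : (γ - Finsupp.single k 1).degree = e + 2 := by
      have h2 := degree_add' (γ - Finsupp.single k 1) (Finsupp.single k 1)
      rw [hE3, degree_single'] at h2
      omega
    have hIH := ih (e+2) (by omega) (pderiv k g) (hder k) (γ - Finsupp.single k 1) hdeg'
      i j hij hki hkj
    have hC : ∀ μ : Fin n →₀ ℕ, ((μ.prod fun _ m => (m.factorial:ℝ)) * (pderiv k g).coeff μ)
        = (((μ + Finsupp.single k 1).prod fun _ m => (m.factorial:ℝ)) *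
            g.coeff (μ + Finsupp.single k 1)) := by
      intro μ
      rw [coeff_pderiv', fact_prod_add_single]
      ring
    rw [hC, hC, hC] at hIH
    have hswap : ∀ a b : Fin n, γ - Finsupp.single a 1 - Finsupp.single b 1
        = γ - Finsupp.single b 1 - Finsupp.single a 1 := by
      intro a b
      rw [tsub_tsub, tsub_tsub, add_comm]
    have hkle : ∀ b : Fin n, 0 < ((γ - Finsupp.single k 1 : Fin n →₀ ℕ) b) →
        Finsupp.single k 1 ≤ γ - Finsupp.single b 1 := by
      intro b hb
      rw [Finsupp.single_le_iff, Finsupp.tsub_apply]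
      rw [Finsupp.tsub_apply] at hb
      by_cases hkb : k = b
      · subst hkb
        rw [Finsupp.single_eq_same] at hb ⊢
        omega
      · rw [Finsupp.single_eq_of_ne (fun h : b = k => hkb h.symm)] at hb
        rw [Finsupp.single_eq_of_ne hkb]
        omega
    have hE1 : γ - Finsupp.single k 1 - Finsupp.single j 1 + Finsupp.single i 1
        + Finsupp.single k 1 = γ - Finsupp.single j 1 + Finsupp.single i 1 := by
      rw [hswap k j, add_right_comm, tsub_add_cancel_of_le (hkle j hkj)]
    have hE2 : γ - Finsupp.single k 1 - Finsupp.single i 1 + Finsupp.single j 1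
        + Finsupp.single k 1 = γ - Finsupp.single i 1 + Finsupp.single j 1 := by
      rw [hswap k i, add_right_comm, tsub_add_cancel_of_le (hkle i hki)]
    rw [hE1, hE2, hE3] at hIH
    exact hIH

/-- Proposition 4.4 of Brändén–Huh: if `N(f)` is Lorentzian then the
coefficients of `f` satisfy `c_α² ≥ c_{α+eᵢ-eⱼ} c_{α-eᵢ+eⱼ}` (with the
convention that the coefficient is `0` when the exponent has a negative entry). -/
theorem stmt0 {n d : ℕ} (f : MvPolynomial (Fin n) ℝ) (hf : f.IsHomogeneous d)
    (hL : Lorentzian d (normalizeMv f)) (α : Fin n →₀ ℕ) (i j : Fin n) :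
    (if 0 < α j then f.coeff (α - Finsupp.single j 1 + Finsupp.single i 1) else 0) *
      (if 0 < α i then f.coeff (α - Finsupp.single i 1 + Finsupp.single j 1) else 0)
      ≤ f.coeff α ^ 2 := by
  by_cases hj : 0 < α j
  swap
  · rw [if_neg hj, zero_mul]; exact sq_nonneg _
  by_cases hi : 0 < α i
  swap
  · rw [if_neg hi, mul_zero]; exact sq_nonneg _
  rw [if_pos hj, if_pos hi]
  by_cases hij : i = j
  · subst hij
    have hE : α - Finsupp.single i 1 + Finsupp.single i 1 = α :=
      tsub_add_cancel_of_le (Finsupp.single_le_iff.mpr hi)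
    rw [hE, pow_two]
  by_cases hdeg : α.degree = d
  · have hcoeff : ∀ γ : Fin n →₀ ℕ, (normalizeMv f).coeff γ
        = f.coeff γ / (γ.prod fun _ m => (m.factorial : ℝ)) := by
      intro γ
      rw [normalizeMv, coeff_sum]
      simp only [coeff_monomial]
      rw [Finset.sum_ite_eq' f.support γ]
      by_cases hmem : γ ∈ f.support
      · rw [if_pos hmem]
      · rw [if_neg hmem, MvPolynomial.notMem_support_iff.mp hmem, zero_div]
    have h1 : ∀ μ : Fin n →₀ ℕ,
        ((μ.prod fun _ m => (m.factorial : ℝ)) * (normalizeMv f).coeff μ) = f.coeff μ := by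
      intro μ
      rw [hcoeff, mul_comm, div_mul_cancel₀]
      exact ne_of_gt (fact_prod_pos μ)
    have hk := key d (normalizeMv f) hL α hdeg i j hij hi hj
    rw [h1, h1, h1] at hk
    exact hk
  · have hdegE : ∀ k l : Fin n, 0 < α l →
        (α - Finsupp.single l 1 + Finsupp.single k 1).degree = α.degree := by
      intro k l hl
      rw [degree_add', degree_single']
      have h2 := degree_add' (α - Finsupp.single l 1) (Finsupp.single l 1)
      rw [tsub_add_cancel_of_le (Finsupp.single_le_iff.mpr hl), degree_single'] at h2
      omega
    rw [hf.coeff_eq_zero (by rw [hdegE i j hj]; exact hdeg),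
        hf.coeff_eq_zero (by rw [hdegE j i hi]; exact hdeg)]
    simpa using sq_nonneg (f.coeff α)
end

section
/- Let J ⊆ ℕ^n be an M-convex set. Then the polynomial f_J = Σ_{α ∈ J} x^α/α! is Lorentzian. -/
open MvPolynomial

section BHaux
open Finset Matrix
variable {n : ℕ}

variable {n : ℕ}

noncomputable def fac (α : Fin n →₀ ℕ) : ℝ := α.prod fun _ m => (Nat.factorial m : ℝ)

lemma fac_eq (α : Fin n →₀ ℕ) : fac α = ∏ i, (Nat.factorial (α i) : ℝ) :=
  Finsupp.prod_fintype _ _ (fun i => by simp)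

lemma fac_pos (α : Fin n →₀ ℕ) : 0 < fac α := by
  rw [fac_eq]; exact Finset.prod_pos fun i _ => by positivity

noncomputable def fJ (J : Finset (Fin n →₀ ℕ)) : MvPolynomial (Fin n) ℝ :=
  ∑ α ∈ J, MvPolynomial.monomial α ((1 : ℝ) / fac α)

lemma coeff_fJ (J : Finset (Fin n →₀ ℕ)) (β : Fin n →₀ ℕ) :
    (fJ J).coeff β = if β ∈ J then 1 / fac β else 0 := by
  classical
  rw [fJ, ← Finset.sum_ite_eq' J β (fun β => 1 / fac β)]
  rw [MvPolynomial.coeff_sum]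
  exact Finset.sum_congr rfl fun α _ => by rw [coeff_monomial]

lemma support_fJ (J : Finset (Fin n →₀ ℕ)) : (fJ J).support = J := by
  classical
  ext β
  rw [MvPolynomial.mem_support_iff, coeff_fJ]
  split
  · have := fac_pos β; simp_all; positivity
  · simp_all

lemma coeff_fJ_nonneg (J : Finset (Fin n →₀ ℕ)) (β : Fin n →₀ ℕ) : 0 ≤ (fJ J).coeff β := by
  rw [coeff_fJ]; split
  · have := fac_pos β; positivity
  · exact le_refl 0

lemma homog_fJ (J : Finset (Fin n →₀ ℕ)) {d : ℕ} (hd : ∀ α ∈ J, (∑ i, α i) = d) :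
    (fJ J).IsHomogeneous d := by
  refine MvPolynomial.IsHomogeneous.sum _ _ _ fun α hα => isHomogeneous_monomial _ ?_
  rw [Finsupp.degree, ← hd α hα]
  exact Finset.sum_subset (Finset.subset_univ _)
    (fun i _ hi => Finsupp.notMem_support_iff.mp hi)


variable {n : ℕ}

noncomputable def Jder (i : Fin n) (J : Finset (Fin n →₀ ℕ)) : Finset (Fin n →₀ ℕ) := by
  classical exact (J.filter (fun α => 1 ≤ α i)).image (fun α => α - Finsupp.single i 1)

lemma sub_add_single {α : Fin n →₀ ℕ} {i : Fin n} (h : 1 ≤ α i) :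
    α - Finsupp.single i 1 + Finsupp.single i 1 = α := by
  ext j
  simp only [Finsupp.add_apply, Finsupp.tsub_apply, Finsupp.single_apply]
  rcases eq_or_ne i j with rfl | hj
  · split_ifs <;> omega
  · simp [hj]

lemma add_sub_single (α : Fin n →₀ ℕ) (i : Fin n) :
    α + Finsupp.single i 1 - Finsupp.single i 1 = α := by
  ext j
  simp only [Finsupp.add_apply, Finsupp.tsub_apply, Finsupp.single_apply]
  split_ifs <;> omega

lemma key_id (α' : Fin n →₀ ℕ) (i k l : Fin n) (h : 1 ≤ α' k) :
    α' - Finsupp.single k 1 + Finsupp.single l 1 + Finsupp.single i 1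
      = (α' + Finsupp.single i 1) - Finsupp.single k 1 + Finsupp.single l 1 := by
  ext j
  simp only [Finsupp.add_apply, Finsupp.tsub_apply, Finsupp.single_apply]
  rcases eq_or_ne k j with rfl | h1
  · split_ifs <;> omega
  · simp only [if_neg h1]
    split_ifs <;> omega

lemma mem_Jder {i : Fin n} {J : Finset (Fin n →₀ ℕ)} {β : Fin n →₀ ℕ} :
    β ∈ Jder i J ↔ ∃ α ∈ J, 1 ≤ α i ∧ α - Finsupp.single i 1 = β := by
  classical
  simp only [Jder, Finset.mem_image, Finset.mem_filter]
  constructor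
  · rintro ⟨α, ⟨h1, h2⟩, h3⟩; exact ⟨α, h1, h2, h3⟩
  · rintro ⟨α, h1, h2, h3⟩; exact ⟨α, ⟨h1, h2⟩, h3⟩

lemma mem_Jder' {i : Fin n} {J : Finset (Fin n →₀ ℕ)} {β : Fin n →₀ ℕ} :
    β ∈ Jder i J ↔ β + Finsupp.single i 1 ∈ J := by
  rw [mem_Jder]
  constructor
  · rintro ⟨α, h1, h2, rfl⟩; rwa [sub_add_single h2]
  · intro h
    exact ⟨β + Finsupp.single i 1, h, by simp, add_sub_single β i⟩

lemma Jder_sum {i : Fin n} {J : Finset (Fin n →₀ ℕ)} {d : ℕ}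
    (hd : ∀ α ∈ J, (∑ k, α k) = d + 1) :
    ∀ β ∈ Jder i J, (∑ k, β k) = d := by
  intro β hβ
  rw [mem_Jder'] at hβ
  have := hd _ hβ
  simp only [Finsupp.add_apply, Finset.sum_add_distrib] at this
  have hs : ∑ k, (Finsupp.single i 1 : Fin n →₀ ℕ) k = 1 := by
    simp [Finsupp.single_apply]
  omega

lemma MConvex_Jder {i : Fin n} {J : Finset (Fin n →₀ ℕ)}
    (hJ : MConvex (J : Set (Fin n →₀ ℕ))) :
    MConvex ((Jder i J : Finset (Fin n →₀ ℕ)) : Set (Fin n →₀ ℕ)) := by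
  intro α' hα' β' hβ' k hk
  simp only [Finset.mem_coe, mem_Jder'] at hα' hβ'
  set α := α' + Finsupp.single i 1 with hα
  set β := β' + Finsupp.single i 1 with hβ
  have hαβk : β k < α k := by
    simp only [hα, hβ, Finsupp.add_apply]; omega
  obtain ⟨l, hl, h1, h2⟩ := hJ α hα' β hβ' k hαβk
  have hl' : α' l < β' l := by
    have e1 : α l = α' l + (Finsupp.single i 1 : Fin n →₀ ℕ) l := by simp [hα]
    have e2 : β l = β' l + (Finsupp.single i 1 : Fin n →₀ ℕ) l := by simp [hβ]
    omega
  refine ⟨l, hl', ?_, ?_⟩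
  · simp only [Finset.mem_coe, mem_Jder']
    rwa [key_id α' i k l (by omega)]
  · simp only [Finset.mem_coe, mem_Jder']
    rwa [key_id β' i l k (by omega)]


lemma euclid_inner {n : ℕ} (x y : EuclideanSpace ℝ (Fin n)) :
    (inner ℝ x y : ℝ) = (x : Fin n → ℝ) ⬝ᵥ (y : Fin n → ℝ) := by
  simp [PiLp.inner_apply, RCLike.inner_apply, dotProduct, mul_comm]

lemma atMostOnePos {n : ℕ} (H : Matrix (Fin n) (Fin n) ℝ) (hH : H.IsHermitian)
    (w : Fin n → ℝ)
    (hneg : ∀ x : Fin n → ℝ, w ⬝ᵥ x = 0 → x ⬝ᵥ (H *ᵥ x) ≤ 0) : AtMostOnePosEig H := by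
  refine ⟨hH, ?_⟩
  by_contra hc
  push_neg at hc
  obtain ⟨i, hi, j, hj, hij⟩ := Finset.one_lt_card.mp hc
  rw [Finset.mem_filter] at hi hj
  have hli := hi.2
  have hlj := hj.2
  have hON := orthonormal_iff_ite.mp hH.eigenvectorBasis.orthonormal
  set v : Fin n → ℝ := (hH.eigenvectorBasis i : Fin n → ℝ) with hv
  set u : Fin n → ℝ := (hH.eigenvectorBasis j : Fin n → ℝ) with hu
  have Hv : H *ᵥ v = hH.eigenvalues i • v := hH.mulVec_eigenvectorBasis i
  have Hu : H *ᵥ u = hH.eigenvalues j • u := hH.mulVec_eigenvectorBasis j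
  have hvv : v ⬝ᵥ v = 1 := by
    have := hON i i; rw [euclid_inner] at this; simpa using this
  have huu : u ⬝ᵥ u = 1 := by
    have := hON j j; rw [euclid_inner] at this; simpa using this
  have hvu : v ⬝ᵥ u = 0 := by
    have := hON i j; rw [euclid_inner] at this; simpa [hij] using this
  have huv : u ⬝ᵥ v = 0 := by rw [dotProduct_comm]; exact hvu
  obtain ⟨a, b, hab, hw⟩ : ∃ a b : ℝ, ¬(a = 0 ∧ b = 0) ∧ w ⬝ᵥ (a • v + b • u) = 0 := by
    by_cases h0 : w ⬝ᵥ v = 0 ∧ w ⬝ᵥ u = 0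
    · exact ⟨1, 0, by simp, by simp [dotProduct_add, dotProduct_smul, h0.1, h0.2]⟩
    · refine ⟨w ⬝ᵥ u, -(w ⬝ᵥ v), fun hcon => h0 ⟨neg_eq_zero.mp hcon.2, hcon.1⟩, ?_⟩
      simp [dotProduct_add, dotProduct_smul, smul_eq_mul]
      ring
  have hq : (a • v + b • u) ⬝ᵥ (H *ᵥ (a • v + b • u))
      = a^2 * hH.eigenvalues i + b^2 * hH.eigenvalues j := by
    simp [Matrix.mulVec_add, Matrix.mulVec_smul, Hv, Hu, dotProduct_add,
      add_dotProduct, dotProduct_smul, smul_dotProduct, smul_eq_mul,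
      hvv, huu, hvu, huv]
    ring
  have hpos : 0 < a^2 * hH.eigenvalues i + b^2 * hH.eigenvalues j := by
    rcases not_and_or.mp hab with h | h
    · have : 0 < a^2 := by positivity
      nlinarith [sq_nonneg b]
    · have : 0 < b^2 := by positivity
      nlinarith [sq_nonneg a]
  have := hneg _ hw
  rw [hq] at this
  linarith

variable {n : ℕ}

lemma fac_succ {α : Fin n →₀ ℕ} {i : Fin n} (h : 1 ≤ α i) :
    fac α = (α i) * fac (α - Finsupp.single i 1) := by
  rw [fac_eq, fac_eq]
  rw [← Finset.mul_prod_erase Finset.univ (fun j => (((α j).factorial : ℝ))) (Finset.mem_univ i)]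
  rw [← Finset.mul_prod_erase Finset.univ
        (fun j => ((((α - Finsupp.single i 1 : Fin n →₀ ℕ) j).factorial : ℝ))) (Finset.mem_univ i)]
  have h1 : (α - Finsupp.single i 1 : Fin n →₀ ℕ) i = α i - 1 := by
    simp [Finsupp.tsub_apply, Finsupp.single_apply]
  rw [h1, ← mul_assoc]
  congr 1
  · rw [← Nat.cast_mul, Nat.mul_factorial_pred (by omega)]
  · refine Finset.prod_congr rfl fun j hj => ?_
    have : (α - Finsupp.single i 1 : Fin n →₀ ℕ) j = α j := by
      simp only [Finsupp.tsub_apply, Finsupp.single_apply]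
      rw [if_neg (Finset.ne_of_mem_erase hj).symm]
      omega
    rw [this]

lemma pderiv_fJ (i : Fin n) (J : Finset (Fin n →₀ ℕ)) :
    MvPolynomial.pderiv i (fJ J) = fJ (Jder i J) := by
  classical
  rw [fJ, map_sum]
  have step : ∀ α ∈ J, MvPolynomial.pderiv i (MvPolynomial.monomial α ((1:ℝ)/fac α))
      = if 1 ≤ α i then
          MvPolynomial.monomial (α - Finsupp.single i 1) ((1:ℝ)/fac (α - Finsupp.single i 1))
        else 0 := by
    intro α _
    rw [pderiv_monomial]
    split_ifs with h
    · congr 1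
      rw [fac_succ h]
      have h2 := fac_pos (α - Finsupp.single i 1)
      have h3 : (α i : ℝ) ≠ 0 := by positivity
      field_simp
    · have : α i = 0 := by omega
      simp [this]
  rw [Finset.sum_congr rfl step, Finset.sum_ite, Finset.sum_const_zero, add_zero]
  rw [fJ, Jder, Finset.sum_image]
  intro a ha b hb hab
  have ha' : 1 ≤ a i := (Finset.mem_filter.mp ha).2
  have hb' : 1 ≤ b i := (Finset.mem_filter.mp hb).2
  have := congrArg (· + Finsupp.single i 1) hab
  simpa [sub_add_single ha', sub_add_single hb'] using this

lemma apply3 (β : Fin n →₀ ℕ) (m i l : Fin n) :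
    (β - Finsupp.single m 1 + Finsupp.single i 1 : Fin n →₀ ℕ) l
      = β l - (if m = l then 1 else 0) + (if i = l then 1 else 0) := by
  simp [Finsupp.add_apply, Finsupp.tsub_apply, Finsupp.single_apply]

lemma pair_apply (i j l : Fin n) :
    (Finsupp.single i 1 + Finsupp.single j 1 : Fin n →₀ ℕ) l
      = (if i = l then 1 else 0) + (if j = l then 1 else 0) := by
  simp [Finsupp.add_apply, Finsupp.single_apply]

lemma eq_pair {β : Fin n →₀ ℕ} (h2 : ∑ l, β l = 2) {i j : Fin n} (hij : i ≠ j)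
    (hi : 1 ≤ β i) (hj : 1 ≤ β j) : β = Finsupp.single i 1 + Finsupp.single j 1 := by
  have hii : β i + β j ≤ ∑ l, β l := by
    rw [← Finset.add_sum_erase _ _ (Finset.mem_univ i),
        ← Finset.add_sum_erase _ _ (Finset.mem_erase.mpr ⟨hij.symm, Finset.mem_univ j⟩)]
    omega
  have hrest : ∀ l, l ≠ i → l ≠ j → β l = 0 := by
    intro l hli hlj
    by_contra hl
    have h1 : 1 ≤ β l := Nat.one_le_iff_ne_zero.mpr hl
    have h3 : β i + (β j + β l) ≤ ∑ m, β m := by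
      rw [← Finset.add_sum_erase _ _ (Finset.mem_univ i),
          ← Finset.add_sum_erase _ _ (Finset.mem_erase.mpr ⟨hij.symm, Finset.mem_univ j⟩),
          ← Finset.add_sum_erase _ _ (Finset.mem_erase.mpr ⟨hlj,
            Finset.mem_erase.mpr ⟨hli, Finset.mem_univ l⟩⟩)]
      omega
    omega
  have vi : β i = 1 := by omega
  have vj : β j = 1 := by omega
  ext l
  rw [pair_apply]
  by_cases e1 : i = l
  · subst e1
    rw [if_pos rfl, if_neg hij.symm, vi]
  · by_cases e2 : j = l
    · subst e2
      rw [if_neg e1, if_pos rfl, vj]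
    · rw [if_neg e1, if_neg e2, hrest l (fun h => e1 h.symm) (fun h => e2 h.symm)]

section Deg2
variable {J : Finset (Fin n →₀ ℕ)} (hJ : MConvex (J : Set (Fin n →₀ ℕ)))
  (hd2 : ∀ α ∈ J, (∑ l, α l) = 2)

include hJ hd2

/-- If `2e_i ∈ J` and `j` occurs in some element of `J`, then `e_i + e_j ∈ J`. -/
lemma lemA {i j : Fin n} (h2 : Finsupp.single i 1 + Finsupp.single i 1 ∈ J)
    {β : Fin n →₀ ℕ} (hβ : β ∈ J) (hβj : 1 ≤ β j) :
    Finsupp.single i 1 + Finsupp.single j 1 ∈ J := by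
  by_cases hij : i = j
  · exact hij ▸ h2
  by_cases hβi : 1 ≤ β i
  · exact (eq_pair (hd2 β hβ) hij hβi hβj) ▸ hβ
  have hβi0 : β i = 0 := by omega
  have hαi : β i < (Finsupp.single i 1 + Finsupp.single i 1 : Fin n →₀ ℕ) i := by
    rw [pair_apply, if_pos rfl]; omega
  obtain ⟨m, hm, hA, hB⟩ := hJ _ h2 β hβ i hαi
  have hmβ : 1 ≤ β m := by omega
  have hmi : m ≠ i := by intro h; rw [h] at hm; omega
  by_cases hmj : m = j
  · subst hmj
    rwa [add_sub_single] at hA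
  · have hB' := hB
    set β' := β - Finsupp.single m 1 + Finsupp.single i 1 with hβ'
    have hβ'i : 1 ≤ β' i := by rw [hβ', apply3, if_neg hmi, if_pos rfl]; omega
    have hβ'j : 1 ≤ β' j := by
      rw [hβ', apply3, if_neg hmj, if_neg hij]; omega
    exact (eq_pair (hd2 β' hB') hij hβ'i hβ'j) ▸ hB'

/-- transitivity step -/
lemma lemB {i j k : Fin n} (hij : i ≠ j) (hjk : j ≠ k) (hik : i ≠ k)
    (hik' : Finsupp.single i 1 + Finsupp.single k 1 ∈ J)
    {β : Fin n →₀ ℕ} (hβ : β ∈ J) (hβj : 1 ≤ β j) :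
    Finsupp.single i 1 + Finsupp.single j 1 ∈ J ∨
      Finsupp.single j 1 + Finsupp.single k 1 ∈ J := by
  by_cases hβi : 1 ≤ β i
  · exact Or.inl ((eq_pair (hd2 β hβ) hij hβi hβj) ▸ hβ)
  by_cases hβk : 1 ≤ β k
  · exact Or.inr ((eq_pair (hd2 β hβ) hjk hβj hβk) ▸ hβ)
  have hβi0 : β i = 0 := by omega
  have hβk0 : β k = 0 := by omega
  have hαi : β i < (Finsupp.single i 1 + Finsupp.single k 1 : Fin n →₀ ℕ) i := by
    rw [pair_apply, if_pos rfl]; omega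
  obtain ⟨m, hm, hA, hB⟩ := hJ _ hik' β hβ i hαi
  have hmβ : 1 ≤ β m := by omega
  have hmi : m ≠ i := by intro h; rw [h] at hm; omega
  have hmk : m ≠ k := by
    intro h; rw [h] at hm
    rw [pair_apply, if_neg hik, if_pos rfl] at hm; omega
  by_cases hmj : m = j
  · subst hmj
    rw [add_comm (Finsupp.single i 1) (Finsupp.single k 1), add_sub_single] at hA
    exact Or.inr (add_comm (Finsupp.single k 1) (Finsupp.single m 1) ▸ hA)
  · have hB' := hB
    set β' := β - Finsupp.single m 1 + Finsupp.single i 1 with hβ'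
    have hβ'i : 1 ≤ β' i := by rw [hβ', apply3, if_neg hmi, if_pos rfl]; omega
    have hβ'j : 1 ≤ β' j := by
      rw [hβ', apply3, if_neg hmj, if_neg hij]; omega
    exact Or.inl ((eq_pair (hd2 β' hB') hij hβ'i hβ'j) ▸ hB')

end Deg2

/-- sum over pairs with equal key is a sum of squares -/
lemma fiber_nonneg {S : Finset (Fin n)} (k : Fin n → Fin n) (x : Fin n → ℝ) :
    0 ≤ ∑ i ∈ S, ∑ j ∈ S, (if k i = k j then x i * x j else 0) := by
  classical
  set F : Fin n → ℝ := fun r => ∑ j ∈ S.filter (fun j => k j = r), x j with hF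
  have step1 : ∀ i ∈ S, (∑ j ∈ S, if k i = k j then x i * x j else 0) = x i * F (k i) := by
    intro i _
    rw [hF, Finset.mul_sum, Finset.sum_filter]
    refine Finset.sum_congr rfl fun j _ => ?_
    by_cases h : k i = k j
    · rw [if_pos h, if_pos h.symm]
    · rw [if_neg h, if_neg (fun hh => h hh.symm)]
  rw [Finset.sum_congr rfl step1]
  rw [← Finset.sum_fiberwise_of_maps_to (g := k) (t := S.image k)
      (fun i hi => Finset.mem_image_of_mem k hi) (fun i => x i * F (k i))]
  have step2 : ∀ r ∈ S.image k,
      (∑ i ∈ S.filter (fun i => k i = r), x i * F (k i)) = F r * F r := by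
    intro r _
    have : ∀ i ∈ S.filter (fun i => k i = r), x i * F (k i) = x i * F r := by
      intro i hi
      rw [(Finset.mem_filter.mp hi).2]
    rw [Finset.sum_congr rfl this, ← Finset.sum_mul]
  rw [Finset.sum_congr rfl step2]
  exact Finset.sum_nonneg fun r _ => mul_self_nonneg _

section Deg2Quad
variable {J : Finset (Fin n →₀ ℕ)} (hJ : MConvex (J : Set (Fin n →₀ ℕ)))
  (hd2 : ∀ α ∈ J, (∑ l, α l) = 2)

open Classical in
noncomputable def Vset (J : Finset (Fin n →₀ ℕ)) : Finset (Fin n) :=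
  Finset.univ.filter (fun i => ∃ α ∈ J, 1 ≤ α i)

open Classical in
noncomputable def Sset (J : Finset (Fin n →₀ ℕ)) : Finset (Fin n) :=
  (Vset J).filter (fun i => Finsupp.single i 1 + Finsupp.single i 1 ∉ J)

lemma mem_V_left {i j : Fin n} (h : Finsupp.single i 1 + Finsupp.single j 1 ∈ J) :
    i ∈ Vset J := by
  classical
  rw [Vset, Finset.mem_filter]
  exact ⟨Finset.mem_univ i, ⟨_, h, by rw [pair_apply, if_pos rfl]; omega⟩⟩

lemma mem_V_right {i j : Fin n} (h : Finsupp.single i 1 + Finsupp.single j 1 ∈ J) :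
    j ∈ Vset J := mem_V_left (add_comm (Finsupp.single i 1) (Finsupp.single j 1) ▸ h)

include hJ hd2

lemma notmem_S {i j : Fin n} (hi : i ∈ Vset J) (hiS : i ∉ Sset J) (hj : j ∈ Vset J) :
    Finsupp.single i 1 + Finsupp.single j 1 ∈ J := by
  classical
  rw [Sset, Finset.mem_filter] at hiS
  push_neg at hiS
  have h2 := hiS hi
  rw [Vset, Finset.mem_filter] at hj
  obtain ⟨β, hβ, hβj⟩ := hj.2
  exact lemA hJ hd2 h2 hβ hβj

lemma sim_trans {i j k : Fin n} (hi : i ∈ Sset J) (hj : j ∈ Sset J) (hk : k ∈ Sset J)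
    (h1 : Finsupp.single i 1 + Finsupp.single j 1 ∉ J)
    (h2 : Finsupp.single j 1 + Finsupp.single k 1 ∉ J) :
    Finsupp.single i 1 + Finsupp.single k 1 ∉ J := by
  classical
  rw [Sset, Finset.mem_filter] at hi hj hk
  by_cases hik : i = k
  · subst hik; exact hi.2
  by_cases hij : i = j
  · subst hij; exact h2
  by_cases hjk : j = k
  · subst hjk; exact h1
  intro hmem
  rw [Vset, Finset.mem_filter] at *
  obtain ⟨β, hβ, hβj⟩ := hj.1.2
  rcases lemB hJ hd2 hij hjk hik hmem hβ hβj with h | h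
  · exact h1 h
  · exact h2 h

open Classical in
noncomputable def repf (J : Finset (Fin n →₀ ℕ)) : Fin n → Fin n := fun i =>
  if h : ((Sset J).filter (fun j => Finsupp.single i 1 + Finsupp.single j 1 ∉ J)).Nonempty
  then ((Sset J).filter (fun j => Finsupp.single i 1 + Finsupp.single j 1 ∉ J)).min' h
  else i

omit hJ hd2 in
lemma sim_symm {i j : Fin n} (h : Finsupp.single i 1 + Finsupp.single j 1 ∉ J) :
    Finsupp.single j 1 + Finsupp.single i 1 ∉ J :=
  fun hc => h (add_comm (Finsupp.single j 1) (Finsupp.single i 1) ▸ hc)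

lemma sim_iff_rep {i j : Fin n} (hi : i ∈ Sset J) (hj : j ∈ Sset J) :
    Finsupp.single i 1 + Finsupp.single j 1 ∉ J ↔ repf J i = repf J j := by
  classical
  have hselfi : Finsupp.single i 1 + Finsupp.single i 1 ∉ J := by
    rw [Sset, Finset.mem_filter] at hi; exact hi.2
  have hselfj : Finsupp.single j 1 + Finsupp.single j 1 ∉ J := by
    rw [Sset, Finset.mem_filter] at hj; exact hj.2
  set Ci := (Sset J).filter (fun l => Finsupp.single i 1 + Finsupp.single l 1 ∉ J) with hCi
  set Cj := (Sset J).filter (fun l => Finsupp.single j 1 + Finsupp.single l 1 ∉ J) with hCj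
  have hnei : Ci.Nonempty := ⟨i, Finset.mem_filter.mpr ⟨hi, hselfi⟩⟩
  have hnej : Cj.Nonempty := ⟨j, Finset.mem_filter.mpr ⟨hj, hselfj⟩⟩
  have hri : repf J i = Ci.min' hnei := by rw [repf, dif_pos hnei]
  have hrj : repf J j = Cj.min' hnej := by rw [repf, dif_pos hnej]
  constructor
  · intro hsim
    have hCij : Ci = Cj := by
      ext l
      simp only [hCi, hCj, Finset.mem_filter]
      constructor
      · rintro ⟨hl, hil⟩
        exact ⟨hl, sim_trans hJ hd2 hj hi hl (sim_symm hsim) hil⟩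
      · rintro ⟨hl, hjl⟩
        exact ⟨hl, sim_trans hJ hd2 hi hj hl hsim hjl⟩
    rw [hri, hrj]
    congr 1
  · intro hrep
    have hmi : repf J i ∈ Ci := hri ▸ Ci.min'_mem hnei
    have hmj : repf J j ∈ Cj := hrj ▸ Cj.min'_mem hnej
    rw [Finset.mem_filter] at hmi hmj
    have h1 : Finsupp.single i 1 + Finsupp.single (repf J i) 1 ∉ J := hmi.2
    have h2 : Finsupp.single j 1 + Finsupp.single (repf J j) 1 ∉ J := hmj.2
    rw [← hrep] at h2
    exact sim_trans hJ hd2 hi hmi.1 hj h1 (sim_symm h2)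

lemma quad_bound (x : Fin n → ℝ) (hx : (∑ i ∈ Vset J, x i) = 0) :
    x ⬝ᵥ ((fun i j => if Finsupp.single i 1 + Finsupp.single j 1 ∈ J then (1:ℝ) else 0 :
      Matrix (Fin n) (Fin n) ℝ) *ᵥ x) ≤ 0 := by
  classical
  have expand : x ⬝ᵥ ((fun i j => if Finsupp.single i 1 + Finsupp.single j 1 ∈ J then (1:ℝ) else 0 :
      Matrix (Fin n) (Fin n) ℝ) *ᵥ x)
      = ∑ i, ∑ j, (if Finsupp.single i 1 + Finsupp.single j 1 ∈ J then x i * x j else 0) := by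
    rw [dotProduct, Finset.sum_congr rfl]
    intro i _
    erw [Matrix.mulVec_apply_eq_sum, Finset.mul_sum]
    refine Finset.sum_congr rfl fun j _ => ?_
    split_ifs <;> ring
  rw [expand]
  -- restrict to V × V
  have stepV : ∀ i, (∑ j, (if Finsupp.single i 1 + Finsupp.single j 1 ∈ J then x i * x j else 0))
      = ∑ j ∈ Vset J, (if Finsupp.single i 1 + Finsupp.single j 1 ∈ J then x i * x j else 0) := by
    intro i
    refine (Finset.sum_subset (Finset.subset_univ _) fun j _ hj => ?_).symm
    rw [if_neg (fun hc => hj (mem_V_right hc))]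
  rw [Finset.sum_congr rfl fun i _ => stepV i]
  have stepV2 : (∑ i, ∑ j ∈ Vset J, (if Finsupp.single i 1 + Finsupp.single j 1 ∈ J then x i * x j else 0))
      = ∑ i ∈ Vset J, ∑ j ∈ Vset J, (if Finsupp.single i 1 + Finsupp.single j 1 ∈ J then x i * x j else 0) := by
    refine (Finset.sum_subset (Finset.subset_univ _) fun i _ hi => ?_).symm
    exact Finset.sum_eq_zero fun j _ => if_neg (fun hc => hi (mem_V_left hc))
  rw [stepV2]
  -- complement decomposition
  have decomp : ∀ i ∈ Vset J, ∀ j ∈ Vset J,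
      (if Finsupp.single i 1 + Finsupp.single j 1 ∈ J then x i * x j else 0)
      = x i * x j - (if Finsupp.single i 1 + Finsupp.single j 1 ∉ J then x i * x j else 0) := by
    intro i _ j _
    by_cases h : Finsupp.single i 1 + Finsupp.single j 1 ∈ J
    · rw [if_pos h, if_neg (fun hc => hc h)]; ring
    · rw [if_neg h, if_pos h]; ring
  rw [Finset.sum_congr rfl fun i hi => Finset.sum_congr rfl fun j hj => decomp i hi j hj]
  simp only [Finset.sum_sub_distrib]
  have sq : ∑ i ∈ Vset J, ∑ j ∈ Vset J, x i * x j = 0 := by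
    rw [← Finset.sum_mul_sum, hx, zero_mul]
  rw [sq]
  -- remaining: 0 - B ≤ 0 i.e. 0 ≤ B
  have hB : 0 ≤ ∑ i ∈ Vset J, ∑ j ∈ Vset J,
      (if Finsupp.single i 1 + Finsupp.single j 1 ∉ J then x i * x j else 0) := by
    have stepS1 : (∑ i ∈ Vset J, ∑ j ∈ Vset J,
        (if Finsupp.single i 1 + Finsupp.single j 1 ∉ J then x i * x j else 0))
        = ∑ i ∈ Sset J, ∑ j ∈ Vset J,
        (if Finsupp.single i 1 + Finsupp.single j 1 ∉ J then x i * x j else 0) := by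
      refine (Finset.sum_subset (Finset.filter_subset _ _) fun i hi hiS => ?_).symm
      exact Finset.sum_eq_zero fun j hj =>
        if_neg (fun hc => hc (notmem_S hJ hd2 hi hiS hj))
    have stepS2 : (∑ i ∈ Sset J, ∑ j ∈ Vset J,
        (if Finsupp.single i 1 + Finsupp.single j 1 ∉ J then x i * x j else 0))
        = ∑ i ∈ Sset J, ∑ j ∈ Sset J,
        (if Finsupp.single i 1 + Finsupp.single j 1 ∉ J then x i * x j else 0) := by
      refine Finset.sum_congr rfl fun i hi => ?_
      refine (Finset.sum_subset (Finset.filter_subset _ _) fun j hj hjS => ?_).symm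
      have hiV : i ∈ Vset J := Finset.mem_of_mem_filter i hi
      have : Finsupp.single j 1 + Finsupp.single i 1 ∈ J := notmem_S hJ hd2 hj hjS hiV
      rw [if_neg (fun hc => hc (add_comm (Finsupp.single j 1) (Finsupp.single i 1) ▸ this))]
    rw [stepS1, stepS2]
    have stepR : ∀ i ∈ Sset J, ∀ j ∈ Sset J,
        (if Finsupp.single i 1 + Finsupp.single j 1 ∉ J then x i * x j else 0)
        = (if repf J i = repf J j then x i * x j else 0) := by
      intro i hi j hj
      rw [if_congr (sim_iff_rep hJ hd2 hi hj) rfl rfl]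
    rw [Finset.sum_congr rfl fun i hi => Finset.sum_congr rfl fun j hj => stepR i hi j hj]
    exact fiber_nonneg (repf J) x
  linarith

end Deg2Quad

lemma fac_zero : fac (0 : Fin n →₀ ℕ) = 1 := by
  rw [fac]; exact Finsupp.prod_zero_index

lemma hess_fJ (J : Finset (Fin n →₀ ℕ)) (i j : Fin n) :
    hessMv (fJ J) i j
      = if Finsupp.single i 1 + Finsupp.single j 1 ∈ J then (1:ℝ) else 0 := by
  show (MvPolynomial.pderiv i (MvPolynomial.pderiv j (fJ J))).coeff 0 = _
  rw [pderiv_fJ, pderiv_fJ, coeff_fJ]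
  have hiff : (0 : Fin n →₀ ℕ) ∈ Jder i (Jder j J) ↔
      Finsupp.single i 1 + Finsupp.single j 1 ∈ J := by
    rw [mem_Jder', mem_Jder', zero_add]
  rw [fac_zero, one_div_one, if_congr hiff rfl rfl]

lemma hess_hermitian (J : Finset (Fin n →₀ ℕ)) : (hessMv (fJ J)).IsHermitian := by
  show (hessMv (fJ J))ᴴ = hessMv (fJ J)
  ext i j
  rw [Matrix.conjTranspose_apply, hess_fJ, hess_fJ, star_trivial,
    add_comm (Finsupp.single j 1)]

lemma hess_atmost {J : Finset (Fin n →₀ ℕ)} (hJ : MConvex (J : Set (Fin n →₀ ℕ)))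
    (hd2 : ∀ α ∈ J, (∑ l, α l) = 2) : AtMostOnePosEig (hessMv (fJ J)) := by
  classical
  have hmat : hessMv (fJ J)
      = (fun i j => if Finsupp.single i 1 + Finsupp.single j 1 ∈ J then (1:ℝ) else 0) := by
    ext i j; rw [hess_fJ]
  refine atMostOnePos _ (hess_hermitian J) (fun i => if i ∈ Vset J then (1:ℝ) else 0) ?_
  intro x hx
  rw [hmat]
  refine quad_bound hJ hd2 x ?_
  rw [dotProduct] at hx
  have hsum : ∑ i, (if i ∈ Vset J then (1:ℝ) else 0) * x i = ∑ i ∈ Vset J, x i := by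
    rw [Finset.sum_congr rfl (fun i _ => by rw [ite_mul, one_mul, zero_mul]),
      Finset.sum_ite_mem, Finset.univ_inter]
  rw [← hsum]
  exact hx

lemma main : ∀ (d : ℕ) (J : Finset (Fin n →₀ ℕ)), MConvex (J : Set (Fin n →₀ ℕ)) →
    (∀ α ∈ J, (∑ i, α i) = d) → Lorentzian d (fJ J)
  | 0, J, hJ, hd => ⟨homog_fJ J hd, coeff_fJ_nonneg J⟩
  | 1, J, hJ, hd => ⟨homog_fJ J hd, coeff_fJ_nonneg J⟩
  | 2, J, hJ, hd => ⟨homog_fJ J hd, coeff_fJ_nonneg J,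
      by rw [support_fJ]; exact hJ, hess_atmost hJ hd⟩
  | (d+3), J, hJ, hd => ⟨homog_fJ J hd, coeff_fJ_nonneg J,
      by rw [support_fJ]; exact hJ,
      fun i => by
        rw [pderiv_fJ]
        exact main (d+2) (Jder i J) (MConvex_Jder hJ) (Jder_sum hd)⟩


end BHaux

/-- For an M-convex set `J` (whose elements all have coordinate sum `d`),
the polynomial `f_J = Σ_{α ∈ J} x^α/α!` is Lorentzian. -/
theorem stmt3 {n d : ℕ} (J : Finset (Fin n →₀ ℕ))
    (hJ : MConvex ((J : Finset (Fin n →₀ ℕ)) : Set (Fin n →₀ ℕ)))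
    (hd : ∀ α ∈ J, (∑ i, α i) = d) :
    Lorentzian d (∑ α ∈ J,
      MvPolynomial.monomial α ((1 : ℝ) / (α.prod fun _ m => (Nat.factorial m : ℝ)))) :=
  main d J hJ hd
end

section
/- Let D be a finite connected planar Eulerian digraph whose edges alternate in/out around each vertex (an alternating dimap), with clockwise-oriented face cycles C_1, ..., C_k partitioning the edge set. Let T be any spanning tree of the underlying undirected graph of D, and fix a root vertex r. Then there exists a spanning arborescence A of D rooted at r (a spanning tree in which every vertex is reachable from r by a directed path) such that for each i ∈ [k], the number of edges of A lying in C_i equals the number of edges of T lying in C_i. -/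
/-- A finite directed multigraph given by source and target maps. -/
structure DigraphStr (V E : Type) where
  src : E → V
  tgt : E → V

namespace DigraphStr

variable {V E : Type} (D : DigraphStr V E)

/-- Directed paths (lists of edges) inside an edge set `T`. -/
inductive DPath (T : Set E) : V → V → List E → Prop
  | nil (v : V) : DPath T v v []
  | cons {u w : V} {e : E} {p : List E} (he : e ∈ T) (hu : D.src e = u)
      (hp : DPath T (D.tgt e) w p) : DPath T u w (e :: p)

/-- Undirected walks (lists of edges, traversed forwards or backwards) inside `T`. -/
inductive UWalk (T : Set E) : V → V → List E → Prop
  | nil (v : V) : UWalk T v v []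
  | consF {u w : V} {e : E} {p : List E} (he : e ∈ T) (hu : D.src e = u)
      (hp : UWalk T (D.tgt e) w p) : UWalk T u w (e :: p)
  | consB {u w : V} {e : E} {p : List E} (he : e ∈ T) (hu : D.tgt e = u)
      (hp : UWalk T (D.src e) w p) : UWalk T u w (e :: p)

/-- `T` is a spanning arborescence rooted at `r`: there is a unique directed
path in `T` from `r` to every vertex. -/
def IsArborescence (T : Set E) (r : V) : Prop :=
  ∀ v : V, ∃! p : List E, D.DPath T r v p

/-- The edge set `T` connects all vertices (in the underlying undirected graph). -/
def Conn (T : Set E) : Prop := ∀ u v : V, ∃ p : List E, D.UWalk T u v p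

/-- `T` is a spanning tree of the underlying undirected graph. -/
def IsSpanningTree [Fintype V] (T : Finset E) : Prop :=
  D.Conn ↑T ∧ T.card + 1 = Fintype.card V

/-- A (nonempty, edge-distinct) directed cycle, given by its list of edges in order. -/
def IsDirCycle (c : List E) : Prop :=
  c ≠ [] ∧ c.Nodup ∧
    ∀ i : Fin c.length,
      D.tgt (c.get i) = D.src (c.get ⟨((i : ℕ) + 1) % c.length, Nat.mod_lt _ i.pos⟩)

end DigraphStr

/-- A planar alternating dimap, encoded as an oriented combinatorial map: the
clockwise faces are directed cycles `cw 1, …, cw k` and the counterclockwise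
faces are directed cycles `ccw 1, …, ccw m`; every edge lies on exactly one
cycle of each family, the underlying graph is connected, and Euler's formula
`|V| - |E| + (k + m) = 2` holds (genus zero, i.e. planarity). -/
structure AltDimap (V E : Type) [Fintype V] [Fintype E] (k : ℕ) extends DigraphStr V E where
  m : ℕ
  cw : Fin k → List E
  ccw : Fin m → List E
  cw_cycle : ∀ i, toDigraphStr.IsDirCycle (cw i)
  ccw_cycle : ∀ j, toDigraphStr.IsDirCycle (ccw j)
  cw_partition : ∀ e : E, ∃! i : Fin k, e ∈ cw i
  ccw_partition : ∀ e : E, ∃! j : Fin m, e ∈ ccw j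
  conn : toDigraphStr.Conn Set.univ
  euler : Fintype.card V + (k + m) = Fintype.card E + 2

namespace DigraphStr

variable {V E : Type} {D : DigraphStr V E}

section Walks

/-- Walks are monotone in the edge set. -/
lemma UWalk.mono {S S' : Set E} (hss : S ⊆ S') {a b : V} {p : List E}
    (h : D.UWalk S a b p) : D.UWalk S' a b p := by
  induction h with
  | nil v => exact .nil v
  | consF he hu _ ih => exact .consF (hss he) hu ih
  | consB he hu _ ih => exact .consB (hss he) hu ih

lemma UWalk.append {S : Set E} {a b c : V} {p q : List E}
    (h : D.UWalk S a b p) (h' : D.UWalk S b c q) : D.UWalk S a c (p ++ q) := by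
  induction h with
  | nil v => exact h'
  | consF he hu _ ih => exact .consF he hu (ih h')
  | consB he hu _ ih => exact .consB he hu (ih h')

lemma UWalk.single_f {S : Set E} {e : E} (he : e ∈ S) :
    D.UWalk S (D.src e) (D.tgt e) [e] := .consF he rfl (.nil _)

lemma UWalk.single_b {S : Set E} {e : E} (he : e ∈ S) :
    D.UWalk S (D.tgt e) (D.src e) [e] := .consB he rfl (.nil _)

lemma UWalk.symm {S : Set E} {a b : V} {p : List E}
    (h : D.UWalk S a b p) : ∃ q, D.UWalk S b a q := by
  induction h with
  | nil v => exact ⟨[], .nil v⟩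
  | @consF u w e p he hu _ ih =>
      obtain ⟨q, hq⟩ := ih
      exact ⟨q ++ [e], hq.append (hu ▸ UWalk.single_b he)⟩
  | @consB u w e p he hu _ ih =>
      obtain ⟨q, hq⟩ := ih
      exact ⟨q ++ [e], hq.append (hu ▸ UWalk.single_f he)⟩

/-- The set of vertices reachable from `r` by undirected walks in `S`. -/
def Rset (D : DigraphStr V E) (S : Set E) (r : V) : Set V := {v | ∃ p, D.UWalk S r v p}

lemma mem_Rset_self {S : Set E} {r : V} : r ∈ D.Rset S r := ⟨[], .nil r⟩

lemma Rset.stepF {S : Set E} {r : V} {e : E} (he : e ∈ S)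
    (h : D.src e ∈ D.Rset S r) : D.tgt e ∈ D.Rset S r := by
  obtain ⟨p, hp⟩ := h
  exact ⟨p ++ [e], hp.append (UWalk.single_f he)⟩

lemma Rset.stepB {S : Set E} {r : V} {e : E} (he : e ∈ S)
    (h : D.tgt e ∈ D.Rset S r) : D.src e ∈ D.Rset S r := by
  obtain ⟨p, hp⟩ := h
  exact ⟨p ++ [e], hp.append (UWalk.single_b he)⟩

lemma Rset.mono {S S' : Set E} (hss : S ⊆ S') {r : V} :
    D.Rset S r ⊆ D.Rset S' r := fun _ ⟨p, hp⟩ => ⟨p, hp.mono hss⟩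

lemma conn_of_rset {S : Set E} {r : V} (h : ∀ v, v ∈ D.Rset S r) : D.Conn S := by
  intro u v
  obtain ⟨p, hp⟩ := h u
  obtain ⟨q, hq⟩ := h v
  obtain ⟨p', hp'⟩ := hp.symm
  exact ⟨p' ++ q, hp'.append hq⟩

end Walks

section Proj

variable [DecidableEq E] {V₂ : Type} {D₂ : DigraphStr V₂ E} {π : V → V₂}

/-- Projecting an undirected walk along a vertex map that collapses the
endpoints of a designated edge `e₀`. -/
lemma UWalk.proj (hs : ∀ e, D₂.src e = π (D.src e)) (ht : ∀ e, D₂.tgt e = π (D.tgt e))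
    {e₀ : E} (h₀ : π (D.src e₀) = π (D.tgt e₀)) {S : Set E} {a b : V} {p : List E}
    (h : D.UWalk S a b p) :
    D₂.UWalk (S \ {e₀}) (π a) (π b) (p.filter (fun x => x ≠ e₀)) := by
  induction h with
  | nil v => exact .nil _
  | @consF u w e p he hu _ ih =>
      by_cases hee : e = e₀
      · subst hee; subst hu
        simpa [List.filter_cons, h₀] using ih
      · rw [List.filter_cons, if_pos (by simpa using hee)]
        exact .consF ⟨he, by simpa using hee⟩ (by rw [hs, hu]) ((ht e).symm ▸ ih)
  | @consB u w e p he hu _ ih =>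
      by_cases hee : e = e₀
      · subst hee; subst hu
        simpa [List.filter_cons, h₀.symm] using ih
      · rw [List.filter_cons, if_pos (by simpa using hee)]
        exact .consB ⟨he, by simpa using hee⟩ (by rw [ht, hu]) ((hs e).symm ▸ ih)

/-- Projecting a directed path along a vertex map that collapses the
endpoints of a designated edge `e₀`. -/
lemma DPath.proj (hs : ∀ e, D₂.src e = π (D.src e)) (ht : ∀ e, D₂.tgt e = π (D.tgt e))
    {e₀ : E} (h₀ : π (D.src e₀) = π (D.tgt e₀)) {S : Set E} {a b : V} {p : List E}
    (h : D.DPath S a b p) :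
    D₂.DPath (S \ {e₀}) (π a) (π b) (p.filter (fun x => x ≠ e₀)) := by
  induction h with
  | nil v => exact .nil _
  | @cons u w e p he hu _ ih =>
      by_cases hee : e = e₀
      · subst hee; subst hu
        simpa [List.filter_cons, h₀] using ih
      · rw [List.filter_cons, if_pos (by simpa using hee)]
        exact .cons ⟨he, by simpa using hee⟩ (by rw [hs, hu]) ((ht e).symm ▸ ih)

end Proj

section Card

/-- In a walk between distinct vertices some edge is a non-loop. -/
lemma UWalk.exists_nonloop {S : Set E} {a b : V} {p : List E}
    (h : D.UWalk S a b p) (hab : a ≠ b) : ∃ e ∈ S, D.src e ≠ D.tgt e := by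
  induction h with
  | nil v => exact absurd rfl hab
  | @consF u w e p he hu _ ih =>
      by_cases hl : D.src e = D.tgt e
      · exact ih (by rw [← hl, hu]; exact hab)
      · exact ⟨e, he, hl⟩
  | @consB u w e p he hu _ ih =>
      by_cases hl : D.src e = D.tgt e
      · exact ih (by rw [hl, hu]; exact hab)
      · exact ⟨e, he, hl⟩

/-- A connected edge set on `V` has at least `|V| - 1` edges. -/
lemma conn_card :
    ∀ (n : ℕ) (V' E' : Type) (_ : DecidableEq V') (_ : DecidableEq E')
    (_ : Fintype V') (_ : Fintype E')
    (D' : DigraphStr V' E') (S : Finset E'), Fintype.card V' = n → D'.Conn ↑S →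
    Fintype.card V' ≤ S.card + 1 := by
  intro n
  induction n using Nat.strong_induction_on with
  | _ n IH =>
    intro V' E' iv ie fv fe D' S hn hconn
    rcases Nat.lt_or_ge n 2 with h2 | h2
    · omega
    · -- find a non-loop edge in S
      obtain ⟨x, y, hxy⟩ := Fintype.exists_pair_of_one_lt_card (α := V') (by omega)
      obtain ⟨p, hp⟩ := hconn x y
      obtain ⟨e₀, he₀S, he₀⟩ := hp.exists_nonloop hxy
      set a := D'.src e₀ with ha
      set b := D'.tgt e₀ with hb
      -- contract b into a
      let π : V' → {v : V' // v ≠ b} := fun x => if h : x = b then ⟨a, he₀⟩ else ⟨x, h⟩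
      let D₂ : DigraphStr {v : V' // v ≠ b} E' := ⟨fun e => π (D'.src e), fun e => π (D'.tgt e)⟩
      have hπ : ∀ x (h : x ≠ b), π x = ⟨x, h⟩ := fun x h => dif_neg h
      have h₀ : π (D'.src e₀) = π (D'.tgt e₀) := by
        show π a = π b
        rw [hπ a he₀]
        simp only [π, dif_pos rfl]
      have hcard : Fintype.card {v : V' // v ≠ b} = n - 1 := by
        have : Fintype.card {v : V' // v = b} = 1 := Fintype.card_subtype_eq b
        have h' := Fintype.card_subtype_compl (p := fun v : V' => v = b)
        rw [this] at h'
        simpa [hn] using h'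
      have hconn₂ : D₂.Conn ↑(S.erase e₀) := by
        intro u v
        obtain ⟨p, hp⟩ := hconn u.1 v.1
        have h := hp.proj (D₂ := D₂) (π := π) (fun e => rfl) (fun e => rfl) h₀
        rw [hπ u.1 u.2, hπ v.1 v.2] at h
        rw [Finset.coe_erase]
        exact ⟨_, h⟩
      have := IH (n-1) (by omega) {v : V' // v ≠ b} E' inferInstance inferInstance
        inferInstance inferInstance D₂ (S.erase e₀) hcard hconn₂
      have hcarde : (S.erase e₀).card = S.card - 1 := Finset.card_erase_of_mem he₀S
      have hSpos : 1 ≤ S.card := Finset.card_pos.2 ⟨e₀, he₀S⟩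
      omega


end Card

section Cross

/-- A closed directed trail that enters a set `K` must also leave it. -/
lemma exists_cross {c : List E} (hc : D.IsDirCycle c) {K : Set V} {g : E}
    (hg : g ∈ c) (h1 : D.src g ∉ K) (h2 : D.tgt g ∈ K) :
    ∃ y ∈ c, D.src y ∈ K ∧ D.tgt y ∉ K := by
  classical
  obtain ⟨hne, _, hcyc⟩ := hc
  have hn : 0 < c.length := List.length_pos_iff.mpr hne
  obtain ⟨⟨jv, hjlt⟩, hj⟩ := List.mem_iff_get.mp hg
  have hgetg : ∀ (i₁ : ℕ) (h₁ : i₁ < c.length), i₁ = jv → c.get ⟨i₁, h₁⟩ = g := by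
    intro i₁ h₁ h
    subst h
    exact hj
  let Q : ℕ → Prop := fun m => D.src (c.get ⟨(jv+1+m) % c.length, Nat.mod_lt _ hn⟩) ∈ K
  have hQ0 : Q 0 := by
    show D.src (c.get ⟨(jv+1+0) % c.length, Nat.mod_lt _ hn⟩) ∈ K
    have h := hcyc ⟨jv, hjlt⟩
    rw [hj] at h
    have heq : c.get ⟨(jv+1+0) % c.length, Nat.mod_lt _ hn⟩
        = c.get ⟨(jv+1) % c.length, Nat.mod_lt _ (Nat.lt_of_le_of_lt (Nat.zero_le _) hjlt)⟩ := by
      congr 1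
    rw [heq, ← h]
    exact h2
  have hQlast : ¬ Q (c.length-1) := by
    show D.src (c.get ⟨(jv+1+(c.length-1)) % c.length, Nat.mod_lt _ hn⟩) ∉ K
    rw [hgetg _ _ (by
      have h1' : jv+1+(c.length-1) = jv + c.length := by omega
      rw [h1', Nat.add_mod_right, Nat.mod_eq_of_lt hjlt])]
    exact h1
  have hex : ∃ m, ¬ Q m := ⟨c.length-1, hQlast⟩
  have hm₀ : ¬ Q (Nat.find hex) := Nat.find_spec hex
  have hm₀pos : Nat.find hex ≠ 0 := by
    intro h
    rw [h] at hm₀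
    exact hm₀ hQ0
  have hprev : Q (Nat.find hex - 1) := by
    by_contra h
    exact absurd (Nat.find_min' hex h) (by omega)
  refine ⟨c.get ⟨(jv+1+(Nat.find hex-1)) % c.length, Nat.mod_lt _ hn⟩,
    List.get_mem c _, hprev, ?_⟩
  rw [hcyc ⟨(jv+1+(Nat.find hex-1)) % c.length, Nat.mod_lt _ hn⟩]
  have heq : c.get ⟨((jv+1+(Nat.find hex-1)) % c.length + 1) % c.length,
        Nat.mod_lt _ (Fin.pos ⟨(jv+1+(Nat.find hex-1)) % c.length, Nat.mod_lt _ hn⟩)⟩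
      = c.get ⟨(jv+1+Nat.find hex) % c.length, Nat.mod_lt _ hn⟩ := by
    congr 1
    apply Fin.ext
    show ((jv+1+(Nat.find hex-1)) % c.length + 1) % c.length = (jv+1+Nat.find hex) % c.length
    rw [Nat.mod_add_mod]
    congr 1
    omega
  rw [heq]
  exact hm₀

end Cross

section LemOut

variable [DecidableEq V] [DecidableEq E] [Fintype V] [Fintype E]

/-- Any spanning tree can be transformed, preserving the number of edges used from
each cycle of a cycle partition, into one containing an edge directed out of `r`. -/
lemma lemout (D : DigraphStr V E) {k : ℕ} (col : Fin k → List E)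
    (hcyc : ∀ i, D.IsDirCycle (col i)) (hpart : ∀ e : E, ∃! i, e ∈ col i)
    (r : V) (hV : 2 ≤ Fintype.card V) :
    ∀ (m : ℕ) (T : Finset E), (T.filter (fun e => D.tgt e = r)).card = m →
    D.IsSpanningTree T →
    ∃ T₂ : Finset E, D.IsSpanningTree T₂ ∧
      (∀ i, (T₂.filter (fun e => e ∈ col i)).card = (T.filter (fun e => e ∈ col i)).card) ∧
      ∃ e ∈ T₂, D.src e = r := by
  intro m
  induction m using Nat.strong_induction_on with
  | _ m IH =>
  intro T hm hT
  by_cases hout : ∃ e ∈ T, D.src e = r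
  · exact ⟨T, hT, fun i => rfl, hout⟩
  push_neg at hout
  -- find an edge of `T` directed into `r`
  obtain ⟨v₀, hv₀⟩ := Fintype.exists_ne_of_one_lt_card (by omega) r
  obtain ⟨p, hp⟩ := hT.1 r v₀
  have hg : ∃ g ∈ T, D.tgt g = r := by
    cases hp with
    | nil => exact absurd rfl hv₀
    | consF he hu _ => exact absurd hu (hout _ (Finset.mem_coe.mp he))
    | consB he hu _ => exact ⟨_, Finset.mem_coe.mp he, hu⟩
  obtain ⟨g, hgT, hgr⟩ := hg
  obtain ⟨ig, hgig, hguniq⟩ := hpart g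
  set K := D.Rset ↑(T.erase g) r with hKdef
  have hrK : r ∈ K := mem_Rset_self
  have hmem' : ∀ e, e ∈ T → e ≠ g → e ∈ (↑(T.erase g) : Set E) := by
    intro e he hne
    exact Finset.mem_coe.mpr (Finset.mem_erase.mpr ⟨hne, he⟩)
  -- (i) src g ∉ K
  have hsrcg : D.src g ∉ K := by
    intro hsK
    have hall : ∀ a b q, D.UWalk ↑T a b q → a ∈ K → b ∈ K := by
      intro a b q hw
      induction hw with
      | nil => exact id
      | @consF u w e q he hu _ ih =>
          intro haK
          apply ih
          by_cases heg : e = g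
          · subst heg; rw [hgr]; exact hrK
          · exact Rset.stepF (hmem' e (Finset.mem_coe.mp he) heg) (hu ▸ haK)
      | @consB u w e q he hu _ ih =>
          intro haK
          apply ih
          by_cases heg : e = g
          · subst heg; exact hsK
          · exact Rset.stepB (hmem' e (Finset.mem_coe.mp he) heg) (hu ▸ haK)
    have hconn' : D.Conn ↑(T.erase g) := by
      apply conn_of_rset
      intro v
      obtain ⟨q, hq⟩ := hT.1 r v
      exact hall r v q hq hrK
    have hcard := conn_card (Fintype.card V) V E inferInstance inferInstance
      inferInstance inferInstance D (T.erase g) rfl hconn'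
    have h1 : (T.erase g).card = T.card - 1 := Finset.card_erase_of_mem hgT
    have h2 : 1 ≤ T.card := Finset.card_pos.2 ⟨g, hgT⟩
    have h3 := hT.2
    omega
  -- dichotomy : each vertex is connected to r or to src g in T \ {g}
  set Ks := D.Rset ↑(T.erase g) (D.src g) with hKsdef
  have hdich : ∀ v, v ∈ K ∨ v ∈ Ks := by
    have hall : ∀ a b q, D.UWalk ↑T a b q → (a ∈ K ∨ a ∈ Ks) → (b ∈ K ∨ b ∈ Ks) := by
      intro a b q hw
      induction hw with
      | nil => exact id
      | @consF u w e q he hu _ ih =>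
          intro haK
          apply ih
          by_cases heg : e = g
          · subst heg; left; rw [hgr]; exact hrK
          · rcases haK with h | h
            · left; exact Rset.stepF (hmem' e (Finset.mem_coe.mp he) heg) (hu ▸ h)
            · right; exact Rset.stepF (hmem' e (Finset.mem_coe.mp he) heg) (hu ▸ h)
      | @consB u w e q he hu _ ih =>
          intro haK
          apply ih
          by_cases heg : e = g
          · subst heg; right; exact mem_Rset_self
          · rcases haK with h | h
            · left; exact Rset.stepB (hmem' e (Finset.mem_coe.mp he) heg) (hu ▸ h)
            · right; exact Rset.stepB (hmem' e (Finset.mem_coe.mp he) heg) (hu ▸ h)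
    intro v
    obtain ⟨q, hq⟩ := hT.1 r v
    exact hall r v q hq (Or.inl hrK)
  -- the crossing edge of the cycle of g
  obtain ⟨y, hyc, hyK, hyK'⟩ := exists_cross (hcyc ig) hgig hsrcg (by rw [hgr]; exact hrK)
  have hyg : y ≠ g := fun h => hsrcg (h ▸ hyK)
  have hyT : y ∉ T := by
    intro hyT
    exact hyK' (Rset.stepF (hmem' y hyT hyg) hyK)
  have hyTe : y ∉ T.erase g := fun h => hyT (Finset.mem_of_mem_erase h)
  set T₂ : Finset E := insert y (T.erase g) with hT₂def
  have hsub : (↑(T.erase g) : Set E) ⊆ ↑T₂ := by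
    intro e he
    exact Finset.mem_coe.mpr (Finset.mem_insert_of_mem (Finset.mem_coe.mp he))
  have hyT₂ : y ∈ (↑T₂ : Set E) := Finset.mem_coe.mpr (Finset.mem_insert_self _ _)
  -- spanning tree
  have hT₂span : D.IsSpanningTree T₂ := by
    constructor
    · apply conn_of_rset
      intro v
      have hsrcy : D.src y ∈ D.Rset ↑T₂ r := by
        obtain ⟨q, hq⟩ := hyK
        exact ⟨q, hq.mono hsub⟩
      have htgty : D.tgt y ∈ D.Rset ↑T₂ r := Rset.stepF hyT₂ hsrcy
      have htgtKs : D.tgt y ∈ Ks := (hdich _).resolve_left hyK'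
      have hsg' : D.src g ∈ D.Rset ↑T₂ r := by
        obtain ⟨q, hq⟩ := htgtKs
        obtain ⟨q', hq'⟩ := (hq.mono hsub).symm
        obtain ⟨q'', hq''⟩ := htgty
        exact ⟨q'' ++ q', hq''.append hq'⟩
      rcases hdich v with h | h
      · obtain ⟨q, hq⟩ := h
        exact ⟨q, hq.mono hsub⟩
      · obtain ⟨q, hq⟩ := h
        obtain ⟨q', hq'⟩ := hsg'
        exact ⟨q' ++ q, hq'.append (hq.mono hsub)⟩
    · rw [Finset.card_insert_of_notMem hyTe, Finset.card_erase_of_mem hgT]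
      have h2 : 1 ≤ T.card := Finset.card_pos.2 ⟨g, hgT⟩
      have h3 := hT.2
      omega
  -- counts are preserved
  obtain ⟨iy, hyiy, hyuniq⟩ := hpart y
  have higiy : ig = iy := hyuniq ig hyc
  have hcounts : ∀ i, (T₂.filter (fun e => e ∈ col i)).card
      = (T.filter (fun e => e ∈ col i)).card := by
    intro i
    rw [hT₂def, Finset.filter_insert, Finset.filter_erase]
    by_cases hi : i = ig
    · subst hi
      rw [if_pos hyc]
      have hgf : g ∈ T.filter (fun e => e ∈ col i) := Finset.mem_filter.mpr ⟨hgT, hgig⟩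
      have hyf : y ∉ (T.filter (fun e => e ∈ col i)).erase g := by
        intro h
        exact hyT (Finset.mem_of_mem_filter y (Finset.mem_of_mem_erase h))
      rw [Finset.card_insert_of_notMem hyf, Finset.card_erase_of_mem hgf]
      have : 1 ≤ (T.filter (fun e => e ∈ col i)).card := Finset.card_pos.2 ⟨g, hgf⟩
      omega
    · have hyni : y ∉ col i := fun h => hi ((hyuniq i h).trans higiy.symm)
      have hgni : g ∉ col i := fun h => hi (hguniq i h)
      rw [if_neg hyni, Finset.erase_eq_of_notMem (fun h => hgni (Finset.mem_filter.mp h).2)]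
  -- the measure strictly decreases
  have htyr : D.tgt y ≠ r := fun h => hyK' (h ▸ hrK)
  have hgf : g ∈ T.filter (fun e => D.tgt e = r) := Finset.mem_filter.mpr ⟨hgT, hgr⟩
  have hmeasure : (T₂.filter (fun e => D.tgt e = r)).card = m - 1 := by
    rw [hT₂def, Finset.filter_insert, if_neg htyr, Finset.filter_erase,
      Finset.card_erase_of_mem hgf, hm]
  have hmpos : 1 ≤ m := hm ▸ Finset.card_pos.2 ⟨g, hgf⟩
  obtain ⟨T₃, hT₃span, hc3, hout3⟩ := IH (m-1) (by omega) T₂ hmeasure hT₂span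
  exact ⟨T₃, hT₃span, fun i => (hc3 i).trans (hcounts i), hout3⟩

end LemOut


section Gen

lemma DPath.append {S : Set E} {a b c : V} {p q : List E}
    (h : D.DPath S a b p) (h' : D.DPath S b c q) : D.DPath S a c (p ++ q) := by
  induction h with
  | nil v => exact h'
  | cons he hu _ ih => exact .cons he hu (ih h')

lemma DPath.single {S : Set E} {e : E} (he : e ∈ S) :
    D.DPath S (D.src e) (D.tgt e) [e] := .cons he rfl (.nil _)

/-- The key inductive theorem: in a digraph whose edges are partitioned into directed
closed trails, every spanning tree admits an arborescence rooted at any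
given vertex using the same number of edges from each trail. -/
theorem gen : ∀ (n : ℕ) (V E : Type) (_ : DecidableEq V) (_ : DecidableEq E)
    (_ : Fintype V) (_ : Fintype E)
    (D : DigraphStr V E) (k : ℕ) (col : Fin k → List E),
    (∀ i, D.IsDirCycle (col i)) → (∀ e : E, ∃! i, e ∈ col i) →
    ∀ (T : Finset E) (r : V), D.IsSpanningTree T → Fintype.card V = n →
    ∃ A : Finset E, D.IsArborescence ↑A r ∧
      ∀ i, (A.filter (fun e => e ∈ col i)).card = (T.filter (fun e => e ∈ col i)).card := by
  intro n
  induction n using Nat.strong_induction_on with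
  | _ n IH =>
  intro V E iv ie fv fe D k col hcyc hpart T r hT hn
  have hpos : 0 < Fintype.card V := Fintype.card_pos_iff.mpr ⟨r⟩
  by_cases h1 : Fintype.card V = 1
  -- base case: one vertex
  · have hall : ∀ a b : V, a = b := Fintype.card_le_one_iff.mp (by omega)
    have hTempty : T = ∅ := by
      have := hT.2
      exact Finset.card_eq_zero.mp (by omega)
    refine ⟨∅, ?_, ?_⟩
    · intro v
      refine ⟨[], hall r v ▸ DPath.nil r, ?_⟩
      intro p hp
      cases hp with
      | nil => rfl
      | cons he _ _ => simp at he
    · intro i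
      rw [hTempty]
  -- inductive step
  · have h2 : 2 ≤ Fintype.card V := by omega
    obtain ⟨T₂, hT₂span, hc2, e₀, he₀T₂, he₀r⟩ :=
      lemout D col hcyc hpart r h2 _ T rfl hT
    -- the contracted vertex
    have hur : D.tgt e₀ ≠ r := by
      intro h
      -- e₀ would be a loop inside a spanning tree: impossible
      have hloop : D.src e₀ = D.tgt e₀ := by rw [he₀r, h]
      have hconn' : D.Conn ↑(T₂.erase e₀) := by
        intro a b
        obtain ⟨p, hp⟩ := hT₂span.1 a b
        have hproj := hp.proj (D₂ := D) (π := id) (fun e => rfl) (fun e => rfl)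
          (e₀ := e₀) (by simpa using hloop)
        rw [Finset.coe_erase]
        exact ⟨_, hproj⟩
      have hcard := conn_card (Fintype.card V) V E inferInstance inferInstance
        inferInstance inferInstance D (T₂.erase e₀) rfl hconn'
      have hc1 : (T₂.erase e₀).card = T₂.card - 1 := Finset.card_erase_of_mem he₀T₂
      have hc2' : 1 ≤ T₂.card := Finset.card_pos.2 ⟨e₀, he₀T₂⟩
      have := hT₂span.2
      omega
    set u := D.tgt e₀ with hudef
    have hru : r ≠ u := fun h => hur h.symm
    -- contraction of e₀ : u is identified with r
    set π : V → {v : V // v ≠ u} := fun x => if h : x = u then ⟨r, hru⟩ else ⟨x, h⟩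
      with hπdef
    have hπval : ∀ (x : V) (h : x ≠ u), π x = ⟨x, h⟩ := fun x h => dif_neg h
    have hπu : π u = ⟨r, hru⟩ := dif_pos rfl
    have hπr : π r = ⟨r, hru⟩ := hπval r hru
    set D' : DigraphStr {v : V // v ≠ u} E :=
      ⟨fun e => π (D.src e), fun e => π (D.tgt e)⟩ with hD'def
    have h₀ : π (D.src e₀) = π (D.tgt e₀) := by rw [he₀r, hπr, hπu]
    have hπcases : ∀ x z : V, π x = π z → x = z ∨ (x = u ∨ x = r) := by
      intro x z h
      by_cases hx : x = u
      · exact Or.inr (Or.inl hx)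
      · rw [hπval x hx] at h
        by_cases hz : z = u
        · rw [hz, hπu] at h
          exact Or.inr (Or.inr (congrArg Subtype.val h))
        · rw [hπval z hz] at h
          exact Or.inl (congrArg Subtype.val h)
    have hcyc' : ∀ i, D'.IsDirCycle (col i) := by
      intro i
      obtain ⟨hne, hnd, hc⟩ := hcyc i
      exact ⟨hne, hnd, fun j => congrArg π (hc j)⟩
    have hcardV' : Fintype.card {v : V // v ≠ u} = n - 1 := by
      have hone : Fintype.card {v : V // v = u} = 1 := Fintype.card_subtype_eq u
      have h' := Fintype.card_subtype_compl (p := fun v : V => v = u)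
      rw [hone] at h'
      simpa [hn] using h'
    set T' : Finset E := T₂.erase e₀ with hT'def
    have hT'span : D'.IsSpanningTree T' := by
      constructor
      · intro a b
        obtain ⟨p, hp⟩ := hT₂span.1 a.1 b.1
        have hproj := hp.proj (D₂ := D') (π := π) (fun e => rfl) (fun e => rfl) h₀
        rw [hπval a.1 a.2, hπval b.1 b.2] at hproj
        rw [hT'def, Finset.coe_erase]
        exact ⟨_, hproj⟩
      · have hc1 : T'.card = T₂.card - 1 := Finset.card_erase_of_mem he₀T₂
        have hc2' : 1 ≤ T₂.card := Finset.card_pos.2 ⟨e₀, he₀T₂⟩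
        have := hT₂span.2
        rw [hcardV']
        omega
    obtain ⟨A', harb', hcA'⟩ := IH (n-1) (by omega) {v : V // v ≠ u} E
      inferInstance inferInstance inferInstance inferInstance D' k col
      hcyc' hpart T' ⟨r, hru⟩ hT'span hcardV'
    -- e₀ is not in A' (it is a loop at the root of the contraction)
    have he₀A' : e₀ ∉ A' := by
      intro h
      have hs' : D'.src e₀ = ⟨r, hru⟩ := by
        show π (D.src e₀) = _
        rw [he₀r, hπr]
      have ht' : D'.tgt e₀ = ⟨r, hru⟩ := by
        show π (D.tgt e₀) = _
        exact hπu
      have hpath : D'.DPath ↑A' ⟨r, hru⟩ ⟨r, hru⟩ [e₀] :=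
        .cons (Finset.mem_coe.mpr h) hs' (ht' ▸ DPath.nil _)
      obtain ⟨q, -, huniq⟩ := harb' ⟨r, hru⟩
      have h1' := huniq [e₀] hpath
      have h2' := huniq [] (DPath.nil _)
      rw [h2'] at h1'
      simp at h1'
    set A : Finset E := insert e₀ A' with hAdef
    have hAe : (↑A : Set E) \ {e₀} = ↑A' := by
      rw [hAdef, Finset.coe_insert, Set.insert_diff_self_of_notMem]
      simpa using he₀A'
    have he₀A : e₀ ∈ (↑A : Set E) := Finset.mem_coe.mpr (Finset.mem_insert_self _ _)
    have hA'A : (↑A' : Set E) ⊆ ↑A := fun e he =>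
      Finset.mem_coe.mpr (Finset.mem_insert_of_mem (Finset.mem_coe.mp he))
    -- existence of directed paths from r
    have hSr : ∃ p, D.DPath ↑A r r p := ⟨[], DPath.nil r⟩
    have hSu : ∃ p, D.DPath ↑A r u p :=
      ⟨[e₀], .cons he₀A he₀r (DPath.nil _)⟩
    have hlift : ∀ (q : List E) (a' b' : {v : V // v ≠ u}), D'.DPath ↑A' a' b' q →
        (∀ x : V, π x = a' → ∃ p, D.DPath ↑A r x p) →
        (∀ y : V, π y = b' → ∃ p, D.DPath ↑A r y p) := by
      intro q a' b' hq
      induction hq with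
      | nil => exact id
      | @cons w₁ w₂ e q' he hu _ ih =>
          intro ha
          apply ih
          intro x hx
          have hsrc : ∃ p, D.DPath ↑A r (D.src e) p := ha (D.src e) hu
          have htgt : ∃ p, D.DPath ↑A r (D.tgt e) p := by
            obtain ⟨p, hp⟩ := hsrc
            exact ⟨p ++ [e], hp.append (DPath.single (hA'A (Finset.mem_coe.mpr
              (Finset.mem_coe.mp he))))⟩
          rcases hπcases x (D.tgt e) hx with h | h | h
          · exact h ▸ htgt
          · exact h ▸ hSu
          · exact h ▸ hSr
    have hreach : ∀ v : V, ∃ p, D.DPath ↑A r v p := by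
      intro v
      obtain ⟨q, hq, -⟩ := harb' (π v)
      refine hlift q ⟨r, hru⟩ (π v) (hπr ▸ hq) ?_ v rfl
      intro x hx
      rcases hπcases x r (by rw [hx, hπr]) with h | h | h
      · exact h ▸ hSr
      · exact h ▸ hSu
      · exact h ▸ hSr
    -- uniqueness of directed paths from r
    have hfilter_ne : ∀ (x : E), x ≠ e₀ → ∀ (l : List E),
        (x :: l).filter (fun z => z ≠ e₀) = x :: l.filter (fun z => z ≠ e₀) := by
      intro x hx l
      rw [List.filter_cons, if_pos (by simpa using hx)]
    have hfilter_eq : ∀ (l : List E),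
        (e₀ :: l).filter (fun z => z ≠ e₀) = l.filter (fun z => z ≠ e₀) := by
      intro l
      rw [List.filter_cons, if_neg (by simp)]
    -- no directed path starting at u can begin with an edge out of r
    have hnotu : ∀ (q : List E) (v : V), D.DPath ↑A u v q →
        (q.filter (fun z => z ≠ e₀) = [] → v = u) ∧
        (∀ (f : E) (l : List E), q.filter (fun z => z ≠ e₀) = f :: l → D.src f = u) := by
      intro q v hq
      cases hq with
      | nil => exact ⟨fun _ => rfl, fun f l h => by simp at h⟩
      | @cons _ _ e₂ q₂ he2 hu2 hq₂ =>
          by_cases heg2 : e₀ = e₂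
          · exfalso
            rw [← heg2, he₀r] at hu2
            exact hur hu2.symm
          · have h2ne : e₂ ≠ e₀ := fun h => heg2 h.symm
            rw [hfilter_ne e₂ h2ne q₂]
            refine ⟨fun h => by simp at h, fun f l h => ?_⟩
            have hef : e₂ = f := by simpa using congrArg (·.head?) h
            rw [← hef]
            exact hu2
    have hL3 : ∀ (p : List E) (a v : V) (q : List E),
        D.DPath ↑A a v p → D.DPath ↑A a v q →
        p.filter (fun x => x ≠ e₀) = q.filter (fun x => x ≠ e₀) → p = q := by
      intro p
      induction p with
      | nil =>
          intro a v q hp hq hf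
          cases hp with
          | nil =>
            cases hq with
            | nil => rfl
            | @cons _ _ f q₁ he hu hq₁ =>
                exfalso
                by_cases heg : e₀ = f
                · subst heg
                  rw [he₀r] at hu
                  subst hu
                  rw [hfilter_eq] at hf
                  have hvu := (hnotu q₁ r hq₁).1 hf.symm
                  exact hur hvu.symm
                · rw [hfilter_ne f (fun h => heg h.symm)] at hf
                  simp at hf
      | cons e p₁ ihp =>
          intro a v q hp hq hf
          cases hp with
          | @cons _ _ _ _ he hu hp₁ =>
          cases hq with
          | nil =>
              exfalso
              by_cases heg : e₀ = e
              · subst heg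
                rw [he₀r] at hu
                subst hu
                rw [hfilter_eq] at hf
                have hvu := (hnotu p₁ r hp₁).1 hf
                exact hur hvu.symm
              · rw [hfilter_ne e (fun h => heg h.symm)] at hf
                simp at hf
          | @cons _ _ f q₁ hef huf hq₁ =>
              by_cases h1' : e₀ = e <;> by_cases h2' : e₀ = f
              · rw [← h1', ← h2']
                rw [← h1'] at hp₁ hf
                rw [← h2'] at hq₁ hf
                rw [hfilter_eq, hfilter_eq] at hf
                rw [ihp _ _ q₁ hp₁ hq₁ hf]
              · exfalso
                rw [← h1'] at hf hu hp₁
                rw [he₀r] at hu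
                subst hu
                rw [hfilter_eq, hfilter_ne f (fun h => h2' h.symm)] at hf
                have hsf := (hnotu p₁ v hp₁).2 f _ hf
                rw [huf] at hsf
                exact hur hsf.symm
              · exfalso
                rw [← h2'] at hf huf hq₁
                rw [he₀r] at huf
                subst huf
                rw [hfilter_ne e (fun h => h1' h.symm), hfilter_eq] at hf
                have hse := (hnotu q₁ v hq₁).2 e _ hf.symm
                rw [hu] at hse
                exact hur hse.symm
              · rw [hfilter_ne e (fun h => h1' h.symm),
                  hfilter_ne f (fun h => h2' h.symm)] at hf
                have hef' : e = f := by simpa using congrArg (·.head?) hf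
                subst hef'
                have hf' : p₁.filter (fun x => x ≠ e₀) = q₁.filter (fun x => x ≠ e₀) := by
                  simpa using congrArg (·.tail) hf
                rw [ihp _ _ q₁ hp₁ hq₁ hf']
    have harb : D.IsArborescence ↑A r := by
      intro v
      obtain ⟨p, hp⟩ := hreach v
      refine ⟨p, hp, ?_⟩
      intro q hq
      have hprojp := hp.proj (D₂ := D') (π := π) (fun e => rfl) (fun e => rfl) h₀
      have hprojq := hq.proj (D₂ := D') (π := π) (fun e => rfl) (fun e => rfl) h₀
      rw [hAe] at hprojp hprojq
      rw [hπr] at hprojp hprojq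
      obtain ⟨w, -, huniq⟩ := harb' (π v)
      have := (huniq _ hprojq).trans (huniq _ hprojp).symm
      exact hL3 q r v p hq hp this
    -- counts
    obtain ⟨i₀, h0i₀, h0uniq⟩ := hpart e₀
    refine ⟨A, harb, ?_⟩
    intro i
    have hfA : A.filter (fun e => e ∈ col i) =
        if e₀ ∈ col i then insert e₀ (A'.filter (fun e => e ∈ col i))
        else A'.filter (fun e => e ∈ col i) := Finset.filter_insert _ _ _
    by_cases hi : e₀ ∈ col i
    · rw [hfA, if_pos hi]
      have he₀fA' : e₀ ∉ A'.filter (fun e => e ∈ col i) := fun h =>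
        he₀A' (Finset.mem_of_mem_filter _ h)
      have he₀fT₂ : e₀ ∈ T₂.filter (fun e => e ∈ col i) :=
        Finset.mem_filter.mpr ⟨he₀T₂, hi⟩
      rw [Finset.card_insert_of_notMem he₀fA', hcA' i, hT'def, Finset.filter_erase,
        Finset.card_erase_of_mem he₀fT₂]
      have hpos' : 1 ≤ (T₂.filter (fun e => e ∈ col i)).card :=
        Finset.card_pos.2 ⟨e₀, he₀fT₂⟩
      rw [← hc2 i]
      omega
    · rw [hfA, if_neg hi, hcA' i, hT'def, Finset.filter_erase,
        Finset.erase_eq_of_notMem (fun h => hi (Finset.mem_filter.mp h).2), hc2 i]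

end Gen


end DigraphStr

/-- Given any spanning tree `T` of (the underlying graph of) an alternating
dimap and any root `r`, there is a spanning arborescence rooted at `r` using
the same number of edges from each clockwise face cycle as `T`. -/
theorem stmt5 {V E : Type} [Fintype V] [Fintype E] [DecidableEq E] {k : ℕ}
    (D : AltDimap V E k) (T : Finset E) (hT : D.toDigraphStr.IsSpanningTree T) (r : V) :
    ∃ A : Finset E, D.toDigraphStr.IsArborescence ↑A r ∧
      ∀ i : Fin k, (A.filter (fun e => e ∈ D.cw i)).card
        = (T.filter (fun e => e ∈ D.cw i)).card := by
  classical
  obtain ⟨A, harb, hcount⟩ := DigraphStr.gen (Fintype.card V) V E (Classical.decEq V)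
    ‹DecidableEq E› ‹Fintype V› ‹Fintype E› D.toDigraphStr k D.cw D.cw_cycle
    D.cw_partition T r hT rfl
  exact ⟨A, harb, hcount⟩
end
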